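/- arXiv:2204.10478 — 2 statements merged into one kernel-verified Lean document; each statement's English description precedes it below -/
import Mathlib

section
/- Let n ≥ 1 be an integer and let F^* be the Borel probability measure on [0,1]^n that is the uniform mixture over k ∈ {1, …, n} of the measures F^{*,k}, where under F^{*,k} all coordinates v_i with i ≠ k equal 0 and coordinate v_k is distributed according to the isorevenue distribution with parameter 1/e. Then for every DSIC mechanism (x, p) for n buyers with values in [0,1], Regret((x,p), F^*) ≥ 1/e. Hence, since F^* is exchangeable, the minimax regret over all joint distributions on [0,1]^n, and over all exchangeable distributions on [0,1]^n, equals 1/e for every n. -/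
open MeasureTheory Real Set ENNReal

noncomputable section

/-- Largest coordinate of `v`. -/
def top1 {n : ℕ} (v : Fin n → ℝ) : ℝ := ⨆ i, v i

/-- Second-largest coordinate of `v` (junk value `0` when `n = 1`). -/
def top2 {n : ℕ} (v : Fin n → ℝ) : ℝ := ⨅ i, ⨆ j ∈ ({i}ᶜ : Set (Fin n)), v j

/-- Regret of the second-price auction with random reserve `μ` against value distribution `G`. -/
def spaRegret (n : ℕ) (μ : Measure ℝ) (G : Measure (Fin n → ℝ)) : ℝ :=
  ∫ v in Set.Icc (0 : Fin n → ℝ) 1,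
    (top1 v - ∫ p in Set.Icc (0:ℝ) 1, (if p ≤ top1 v then max (top2 v) p else 0) ∂μ) ∂G

def gfun (n : ℕ) (r : ℝ) : ℝ :=
  (1 - r) ^ (n - 1) + Real.log r + ∑ k ∈ Finset.Icc 1 (n-1), (1 - r) ^ k / (k : ℝ)

def Phi (n : ℕ) (rs : ℝ) (v : ℝ) : ℝ :=
  if v ≤ rs then 0
  else (v / (v - rs)) ^ (n - 1) * Real.log (v / rs)
       - ∑ k ∈ Finset.Icc 1 (n-1), (1 / (k:ℝ)) * (v / (v - rs)) ^ (n - 1 - k)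

def PhiExt (n : ℕ) (rs : ℝ) (v : ℝ) : ℝ := if v ≤ 1 then Phi n rs v else 1

def isoCDF (r : ℝ) (v : ℝ) : ℝ := if v < r then 0 else if v < 1 then 1 - r / v else 1

/-- Regret of a direct mechanism with payment rule `p` against value distribution `G`. -/
def mechRegret (n : ℕ) (p : (Fin n → ℝ) → Fin n → ℝ) (G : Measure (Fin n → ℝ)) : ℝ :=
  ∫ v in Set.Icc (0 : Fin n → ℝ) 1, (top1 v - ∑ i, p v i) ∂G

/-- Dominant-strategy incentive compatible mechanism for `n` buyers with values in `[0,1]`. -/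
def DSIC (n : ℕ) (x p : (Fin n → ℝ) → Fin n → ℝ) : Prop :=
  Measurable x ∧ Measurable p ∧ (∃ C, ∀ v i, |p v i| ≤ C) ∧
  ∀ v ∈ Set.Icc (0 : Fin n → ℝ) 1, (∑ j, x v j) ≤ 1 ∧ ∀ i,
    0 ≤ x v i ∧ 0 ≤ v i * x v i - p v i ∧
    ∀ w ∈ Set.Icc (0:ℝ) 1,
      v i * x (Function.update v i w) i - p (Function.update v i w) i ≤ v i * x v i - p v i

def Exchangeable (n : ℕ) (μ : Measure (Fin n → ℝ)) : Prop :=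
  ∀ σ : Equiv.Perm (Fin n), Measure.map (fun v i => v (σ i)) μ = μ

def Affiliated (n : ℕ) (μ : Measure (Fin n → ℝ)) : Prop :=
  ∃ (lam : Measure ℝ) (f : (Fin n → ℝ) → ℝ≥0∞), Measurable f ∧
    μ = (Measure.pi fun _ : Fin n => lam).withDensity f ∧
    ∀ᵐ q ∂((Measure.pi fun _ : Fin n => lam).prod (Measure.pi fun _ : Fin n => lam)),
      f q.1 * f q.2 ≤ f (q.1 ⊓ q.2) * f (q.1 ⊔ q.2)

def worstCase (n : ℕ) (p : (Fin n → ℝ) → Fin n → ℝ) (C : Set (Measure (Fin n → ℝ))) : ℝ :=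
  sSup {w | ∃ G ∈ C, w = mechRegret n p G}

def minimaxRegret (n : ℕ) (C : Set (Measure (Fin n → ℝ))) : ℝ :=
  sInf {w | ∃ x p, DSIC n x p ∧ w = worstCase n p C}

def iidClass (n : ℕ) : Set (Measure (Fin n → ℝ)) :=
  {G | ∃ F : Measure ℝ, IsProbabilityMeasure F ∧ F (Set.Icc 0 1) = 1 ∧
        G = Measure.pi fun _ => F}

def affClass (n : ℕ) : Set (Measure (Fin n → ℝ)) :=
  {G | IsProbabilityMeasure G ∧ G (Set.Icc 0 1) = 1 ∧ Exchangeable n G ∧ Affiliated n G}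

def exchClass (n : ℕ) : Set (Measure (Fin n → ℝ)) :=
  {G | IsProbabilityMeasure G ∧ G (Set.Icc 0 1) = 1 ∧ Exchangeable n G}

def allClass (n : ℕ) : Set (Measure (Fin n → ℝ)) :=
  {G | IsProbabilityMeasure G ∧ G (Set.Icc 0 1) = 1}



namespace S16
def rr : ℝ := Real.exp (-1)
lemma rr_pos : 0 < rr := Real.exp_pos _
lemma rr_lt_one : rr < 1 := by
  have : Real.exp (-1) < Real.exp 0 := Real.exp_lt_exp.mpr (by norm_num)
  simpa [rr] using this
lemma log_rr : Real.log rr = -1 := Real.log_exp _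
lemma rr_le_one : rr ≤ 1 := rr_lt_one.le

def cf (t : ℝ) : ℝ := max rr (min t 1)
def Hf (t : ℝ) : ℝ := Real.log (cf t) + 1

lemma rr_le_cf (t : ℝ) : rr ≤ cf t := le_max_left _ _
lemma cf_pos (t : ℝ) : 0 < cf t := lt_of_lt_of_le rr_pos (rr_le_cf t)
lemma cf_le_one (t : ℝ) : cf t ≤ 1 := max_le rr_le_one (min_le_right _ _)
lemma cf_mono : Monotone cf := fun a b hab => by
  unfold cf; exact max_le_max le_rfl (min_le_min hab le_rfl)
lemma le_cf {t : ℝ} (ht : t ≤ 1) : t ≤ cf t := by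
  unfold cf; rw [min_eq_left ht]; exact le_max_right _ _
lemma cf_eq_max {t : ℝ} (ht : t ≤ 1) : cf t = max rr t := by
  unfold cf; rw [min_eq_left ht]
lemma Hf_nonneg (t : ℝ) : 0 ≤ Hf t := by
  have : Real.log rr ≤ Real.log (cf t) :=
    Real.log_le_log rr_pos (rr_le_cf t)
  rw [log_rr] at this; unfold Hf; linarith
lemma Hf_le_one (t : ℝ) : Hf t ≤ 1 := by
  have : Real.log (cf t) ≤ 0 := Real.log_nonpos (cf_pos t).le (cf_le_one t)
  unfold Hf; linarith

/-- monotonicity of `t ↦ t log t` on `[rr, 1]`. -/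
lemma mulLog_mono {a b : ℝ} (ha : rr ≤ a) (hab : a ≤ b) (hb : b ≤ 1) :
    a * Real.log a ≤ b * Real.log b := by
  have ha0 : 0 < a := lt_of_lt_of_le rr_pos ha
  have key : b * Real.log b - a * Real.log a = ∫ s in a..b, (Real.log s + 1) := by
    rw [intervalIntegral.integral_eq_sub_of_hasDerivAt (f := fun y => y * Real.log y)]
    · intro x hx
      rw [uIcc_of_le hab] at hx
      exact Real.hasDerivAt_mul_log (by linarith [hx.1] : x ≠ 0)
    · apply ContinuousOn.intervalIntegrable
      apply ContinuousOn.add _ continuousOn_const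
      apply Real.continuousOn_log.mono
      intro x hx
      rw [uIcc_of_le hab] at hx
      simp only [mem_compl_iff, mem_singleton_iff]
      intro h; rw [h] at hx; linarith [hx.1]
  have : 0 ≤ ∫ s in a..b, (Real.log s + 1) := by
    apply intervalIntegral.integral_nonneg hab
    intro x hx
    have : Real.log rr ≤ Real.log x := Real.log_le_log rr_pos (le_trans ha hx.1)
    rw [log_rr] at this; linarith
  linarith

/-- the key incentive inequality. -/
lemma keyU {a s t : ℝ} (ha0 : 0 ≤ a) (has : a ≤ cf s) (hd : cf s ≤ cf t ∨ cf s ≤ a) :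
    a * Real.log (cf t / cf s) ≤ cf t - cf s := by
  have hs := cf_pos s
  have ht := cf_pos t
  have hlog : Real.log (cf t / cf s) ≤ cf t / cf s - 1 :=
    Real.log_le_sub_one_of_pos (by positivity)
  rcases hd with hd | hd
  · have hln : 0 ≤ Real.log (cf t / cf s) :=
      Real.log_nonneg ((le_div_iff₀ hs).mpr (by linarith))
    calc a * Real.log (cf t / cf s) ≤ cf s * Real.log (cf t / cf s) := by
          exact mul_le_mul_of_nonneg_right has hln
      _ ≤ cf s * (cf t / cf s - 1) := by
          exact mul_le_mul_of_nonneg_left hlog hs.le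
      _ = cf t - cf s := by field_simp
  · have hsa : cf s = a := le_antisymm hd has
    rw [hsa] at hlog ⊢
    have ha0' : 0 < a := hsa ▸ hs
    calc a * Real.log (cf t / a) ≤ a * (cf t / a - 1) :=
          mul_le_mul_of_nonneg_left hlog ha0
      _ = cf t - a := by field_simp

end S16
namespace S16
open Classical in
/-- winner predicate: `i` has the max value, with ties broken to lowest index -/
def Win {n : ℕ} (i : Fin n) (v : Fin n → ℝ) : Prop :=
  (∀ j, v j ≤ v i) ∧ ∀ j, j < i → v j < v i

/-- max of opponents' bids (floored at 0) -/
def mfun {n : ℕ} (i : Fin n) (v : Fin n → ℝ) : ℝ :=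
  (Finset.univ.erase i).fold max 0 v

def myx (n : ℕ) : (Fin n → ℝ) → Fin n → ℝ := fun v i =>
  Set.indicator {w | Win i w} (fun w => Hf (w i)) v

def myp (n : ℕ) : (Fin n → ℝ) → Fin n → ℝ := fun v i =>
  Set.indicator {w | Win i w}
    (fun w => cf (mfun i w) * Hf (mfun i w) + cf (w i) - cf (mfun i w)) v

variable {n : ℕ}

lemma mfun_nonneg (i : Fin n) (v : Fin n → ℝ) : 0 ≤ mfun i v :=
  (Finset.le_fold_max _).mpr (Or.inl le_rfl)

lemma le_mfun {i j : Fin n} (hij : j ≠ i) (v : Fin n → ℝ) : v j ≤ mfun i v :=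
  (Finset.le_fold_max _).mpr (Or.inr ⟨j, Finset.mem_erase.mpr ⟨hij, Finset.mem_univ j⟩, le_rfl⟩)

lemma mfun_le {i : Fin n} {v : Fin n → ℝ} {b : ℝ} (hb : 0 ≤ b)
    (h : ∀ j, j ≠ i → v j ≤ b) : mfun i v ≤ b :=
  (Finset.fold_max_le _).mpr ⟨hb, fun j hj => h j (Finset.mem_erase.mp hj).1⟩

lemma mfun_update (i : Fin n) (v : Fin n → ℝ) (w : ℝ) :
    mfun i (Function.update v i w) = mfun i v := by
  unfold mfun
  apply Finset.fold_congr
  intro j hj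
  exact Function.update_of_ne (Finset.mem_erase.mp hj).1 _ _

lemma Win_unique {i j : Fin n} {v : Fin n → ℝ} (hi : Win i v) (hj : Win j v) : i = j := by
  by_contra h
  rcases lt_or_gt_of_ne h with hlt | hlt
  · exact absurd (hi.1 j) (not_le.mpr (hj.2 i hlt))
  · exact absurd (hj.1 i) (not_le.mpr (hi.2 j hlt))

lemma measurableSet_Win (i : Fin n) : MeasurableSet {w : Fin n → ℝ | Win i w} := by
  have h1 : {w : Fin n → ℝ | Win i w} =
      (⋂ j, {w : Fin n → ℝ | w j ≤ w i}) ∩ ⋂ j, {w : Fin n → ℝ | j < i → w j < w i} := by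
    ext w; simp [Win, Set.mem_iInter, forall_and]
  rw [h1]
  apply MeasurableSet.inter
  · exact MeasurableSet.iInter fun j =>
      measurableSet_le (measurable_pi_apply j) (measurable_pi_apply i)
  · refine MeasurableSet.iInter fun j => ?_
    by_cases hj : j < i
    · simp only [hj, forall_true_left]
      exact measurableSet_lt (measurable_pi_apply j) (measurable_pi_apply i)
    · simp only [hj, false_implies, setOf_true]
      exact MeasurableSet.univ

lemma measurable_fold_max (s : Finset (Fin n)) :
    Measurable (fun v : Fin n → ℝ => s.fold max (0:ℝ) v) := by
  classical
  induction s using Finset.induction_on with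
  | empty => simpa using measurable_const
  | insert a s' h ih =>
      simpa [Finset.fold_insert h] using Measurable.max (measurable_pi_apply a) ih

lemma measurable_mfun (i : Fin n) : Measurable (fun v : Fin n → ℝ => mfun i v) :=
  measurable_fold_max _

lemma continuous_cf : Continuous cf := by
  unfold cf; fun_prop

lemma continuous_Hf : Continuous Hf := by
  unfold Hf
  apply Continuous.add _ continuous_const
  apply Real.continuousOn_log.comp_continuous continuous_cf
  intro x; exact (cf_pos x).ne'

lemma measurable_myx : Measurable (myx n) := by
  apply measurable_pi_lambda
  intro i
  exact Measurable.indicator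
    (continuous_Hf.measurable.comp (measurable_pi_apply i)) (measurableSet_Win i)

lemma measurable_myp : Measurable (myp n) := by
  apply measurable_pi_lambda
  intro i
  apply Measurable.indicator _ (measurableSet_Win i)
  have hm : Measurable (fun w : Fin n → ℝ => mfun i w) := measurable_mfun i
  have hc := continuous_cf.measurable
  have hH := continuous_Hf.measurable
  exact (((hc.comp hm).mul (hH.comp hm)).add
    (hc.comp (measurable_pi_apply i))).sub (hc.comp hm)

lemma myp_bound (v : Fin n → ℝ) (i : Fin n) : |myp n v i| ≤ 3 := by
  unfold myp
  rcases Set.indicator_eq_zero_or_self {w : Fin n → ℝ | Win i w}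
    (fun w => cf (mfun i w) * Hf (mfun i w) + cf (w i) - cf (mfun i w)) v with h | h
  · rw [h]; norm_num
  · rw [h]
    have h1 := cf_pos (mfun i v); have h2 := cf_le_one (mfun i v)
    have h3 := Hf_nonneg (mfun i v); have h4 := Hf_le_one (mfun i v)
    have h5 := cf_pos (v i); have h6 := cf_le_one (v i)
    have : cf (mfun i v) * Hf (mfun i v) ≤ 1 :=
      mul_le_one₀ h2 h3 h4
    have : 0 ≤ cf (mfun i v) * Hf (mfun i v) := by positivity
    rw [abs_le]; constructor <;> nlinarith

end S16
namespace S16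
variable {n : ℕ}

lemma util_nonneg {a m : ℝ} (ha0 : 0 ≤ a) (ha1 : a ≤ 1) (hma : m ≤ a) :
    0 ≤ a * Hf a - (cf m * Hf m + cf a - cf m) := by
  rcases le_or_gt a rr with h | h
  · have hca : cf a = rr := by rw [cf_eq_max ha1]; exact max_eq_left h
    have hcm : cf m = rr := by
      unfold cf
      exact max_eq_left (le_trans (min_le_left _ _) (le_trans hma h))
    unfold Hf
    rw [hca, hcm, log_rr]
    ring_nf
    linarith
  · have hca : cf a = a := by
      rw [cf_eq_max ha1]; exact max_eq_right h.le
    have hcm : cf m ≤ a := by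
      calc cf m ≤ cf a := cf_mono hma
        _ = a := hca
    have hmono := mulLog_mono (rr_le_cf m) hcm ha1
    unfold Hf
    rw [hca]
    nlinarith [Hf_nonneg m]

lemma Hf_diff_le {a s w : ℝ} (ha0 : 0 ≤ a) (has : a ≤ cf s)
    (hd : cf s ≤ cf w ∨ cf s ≤ a) :
    a * Hf w - a * Hf s ≤ cf w - cf s := by
  have h := keyU ha0 has hd
  rw [Real.log_div (cf_pos w).ne' (cf_pos s).ne'] at h
  unfold Hf
  nlinarith

lemma myIR {v : Fin n → ℝ} (hv : v ∈ Set.Icc (0 : Fin n → ℝ) 1) (i : Fin n) :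
    0 ≤ v i * myx n v i - myp n v i := by
  have h0 : 0 ≤ v i := by simpa using hv.1 i
  have h1 : v i ≤ 1 := by simpa using hv.2 i
  by_cases hi : Win i v
  · unfold myx myp
    rw [Set.indicator_of_mem (show v ∈ {w | Win i w} from hi),
      Set.indicator_of_mem (show v ∈ {w | Win i w} from hi)]
    exact util_nonneg h0 h1 (mfun_le h0 fun j _ => hi.1 j)
  · unfold myx myp
    rw [Set.indicator_of_notMem (show v ∉ {w | Win i w} from hi),
      Set.indicator_of_notMem (show v ∉ {w | Win i w} from hi)]
    simp

lemma not_Win_le_mfun {v : Fin n → ℝ} {i : Fin n} (hwin : ¬ Win i v) :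
    v i ≤ mfun i v := by
  unfold Win at hwin
  push_neg at hwin
  by_cases hA : ∀ j, v j ≤ v i
  · obtain ⟨j, hj, hvj⟩ := hwin hA
    exact le_trans hvj (le_mfun (ne_of_lt hj) v)
  · push_neg at hA
    obtain ⟨j, hvj⟩ := hA
    have hji : j ≠ i := by rintro rfl; exact lt_irrefl _ hvj
    exact le_trans hvj.le (le_mfun hji v)

theorem myDSIC (n : ℕ) : DSIC n (myx n) (myp n) := by
  refine ⟨measurable_myx, measurable_myp, ⟨3, myp_bound⟩, ?_⟩
  intro v hv
  have h0 : ∀ j, 0 ≤ v j := fun j => by simpa using hv.1 j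
  have h1 : ∀ j, v j ≤ 1 := fun j => by simpa using hv.2 j
  constructor
  · by_cases hex : ∃ i, Win i v
    · obtain ⟨i, hi⟩ := hex
      have hsum : ∑ j, myx n v j = myx n v i := by
        apply Finset.sum_eq_single
        · intro j _ hj
          exact Set.indicator_of_notMem
            (show v ∉ {w | Win j w} from fun hw => hj (Win_unique hw hi)) _
        · simp
      rw [hsum]
      calc myx n v i = Hf (v i) :=
            Set.indicator_of_mem (show v ∈ {w | Win i w} from hi) _
        _ ≤ 1 := Hf_le_one _
    · push_neg at hex
      have : ∀ j, myx n v j = 0 := fun j =>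
        Set.indicator_of_notMem (show v ∉ {w | Win j w} from hex j) _
      simp [this]
  · intro i
    refine ⟨Set.indicator_nonneg (fun _ _ => Hf_nonneg _) _, myIR hv i, ?_⟩
    intro w hw
    have hm' : mfun i (Function.update v i w) = mfun i v := mfun_update i v w
    by_cases hwin' : Win i (Function.update v i w)
    · have hmw : mfun i v ≤ w := by
        rw [← hm']
        apply mfun_le hw.1
        intro j hj
        rw [Function.update_of_ne hj]
        have := hwin'.1 j
        rwa [Function.update_of_ne hj, Function.update_self] at this
      unfold myx myp
      rw [Set.indicator_of_mem (show _ ∈ {w | Win i w} from hwin'),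
        Set.indicator_of_mem (show _ ∈ {w | Win i w} from hwin'), hm',
        Function.update_self]
      by_cases hwin : Win i v
      · rw [Set.indicator_of_mem (show v ∈ {w | Win i w} from hwin),
          Set.indicator_of_mem (show v ∈ {w | Win i w} from hwin)]
        have hle : v i ≤ cf (v i) := le_cf (h1 i)
        have hd : cf (v i) ≤ cf w ∨ cf (v i) ≤ v i := by
          rw [cf_eq_max (h1 i)]
          rcases max_choice rr (v i) with h | h
          · left; rw [h]; exact rr_le_cf w
          · right; rw [h]
        have hkey := Hf_diff_le (h0 i) hle hd
        linarith
      · rw [Set.indicator_of_notMem (show v ∉ {w | Win i w} from hwin),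
          Set.indicator_of_notMem (show v ∉ {w | Win i w} from hwin)]
        have hvim : v i ≤ mfun i v := not_Win_le_mfun hwin
        have hm1 : mfun i v ≤ 1 := mfun_le zero_le_one fun j _ => h1 j
        have hmcm : mfun i v ≤ cf (mfun i v) := le_cf hm1
        have hkey := Hf_diff_le (h0 i) (le_trans hvim hmcm)
          (Or.inl (cf_mono hmw))
        have h3 : v i * Hf (mfun i v) - cf (mfun i v) * Hf (mfun i v) ≤ 0 := by
          have := mul_nonpos_of_nonpos_of_nonneg
            (by linarith : v i - cf (mfun i v) ≤ 0) (Hf_nonneg (mfun i v))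
          nlinarith
        simp only [mul_zero, sub_zero]
        nlinarith
    · unfold myx myp
      rw [Set.indicator_of_notMem (show _ ∉ {w | Win i w} from hwin'),
        Set.indicator_of_notMem (show _ ∉ {w | Win i w} from hwin')]
      have := myIR hv i; unfold myx myp at this; simpa using this

/-- winner existence -/
lemma exists_Win (hn : 1 ≤ n) (v : Fin n → ℝ) : ∃ i, Win i v := by
  classical
  haveI : NeZero n := ⟨by omega⟩
  obtain ⟨b, -, hb⟩ := Finset.exists_max_image (Finset.univ : Finset (Fin n)) v ⟨0, Finset.mem_univ _⟩
  have hP : ∀ j', v j' ≤ v b := fun j' => hb j' (Finset.mem_univ _)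
  set s : Finset (Fin n) := Finset.univ.filter (fun j => ∀ j', v j' ≤ v j) with hs
  have hsne : s.Nonempty := ⟨b, by simp [hs, hP]⟩
  refine ⟨s.min' hsne, ?_, ?_⟩
  · have := (Finset.mem_filter.mp (s.min'_mem hsne)).2
    exact this
  · intro j hj
    by_contra hle
    have hPj : ∀ j', v j' ≤ v j := by
      intro j'
      have hmax := (Finset.mem_filter.mp (s.min'_mem hsne)).2
      exact le_trans (hmax j') (not_lt.mp hle)
    have : s.min' hsne ≤ j := s.min'_le j (by simp [hs, hPj])
    exact absurd hj (not_lt.mpr this)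

lemma top1_eq {v : Fin n → ℝ} {i : Fin n} (hi : ∀ j, v j ≤ v i) : top1 v = v i := by
  haveI : Nonempty (Fin n) := ⟨i⟩
  apply le_antisymm
  · exact ciSup_le hi
  · exact le_ciSup (Set.Finite.bddAbove (Set.finite_range v)) i

/-- pointwise regret bound for the constructed mechanism -/
lemma myp_regret (hn : 1 ≤ n) {v : Fin n → ℝ} (hv : v ∈ Set.Icc (0 : Fin n → ℝ) 1) :
    top1 v - ∑ i, myp n v i ≤ rr := by
  have h0 : ∀ j, 0 ≤ v j := fun j => by simpa using hv.1 j
  have h1 : ∀ j, v j ≤ 1 := fun j => by simpa using hv.2 j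
  obtain ⟨i, hi⟩ := exists_Win hn v
  have htop : top1 v = v i := top1_eq hi.1
  have hsum : ∑ j, myp n v j = myp n v i := by
    apply Finset.sum_eq_single
    · intro j _ hj
      exact Set.indicator_of_notMem
        (show v ∉ {w | Win j w} from fun hw => hj (Win_unique hw hi)) _
    · simp
  rw [htop, hsum]
  unfold myp
  rw [Set.indicator_of_mem (show v ∈ {w | Win i w} from hi)]
  set m := mfun i v with hm
  have hm1 : m ≤ 1 := mfun_le zero_le_one fun j _ => h1 j
  have hcm1 : cf m ≤ 1 := cf_le_one m
  have hcmr : rr ≤ cf m := rr_le_cf m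
  have hlog : rr * Real.log rr ≤ cf m * Real.log (cf m) := mulLog_mono le_rfl hcmr hcm1
  rw [log_rr] at hlog
  have hvc : v i ≤ cf (v i) := le_cf (h1 i)
  unfold Hf
  nlinarith

end S16
namespace S16

lemma integral_le_sub {X u : ℝ → ℝ} {a b : ℝ} (hab : a ≤ b)
    (hmono : MonotoneOn X (Set.Icc a b))
    (hgrow : ∀ s t, a ≤ s → s ≤ t → t ≤ b → (t - s) * X s ≤ u t - u s) :
    ∫ s in a..b, X s ≤ u b - u a := by
  rcases eq_or_lt_of_le hab with rfl | hab'
  · simp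
  apply _root_.le_of_forall_pos_le_add
  intro ε hε
  obtain ⟨N, hNgt⟩ := exists_nat_gt (max 1 ((b - a) * (X b - X a) / ε))
  have hN1 : (1:ℝ) ≤ N := le_of_lt (lt_of_le_of_lt (le_max_left _ _) hNgt)
  have hN0 : (0:ℝ) < N := by linarith
  have hNne : (N:ℝ) ≠ 0 := hN0.ne'
  set δ : ℝ := (b - a) / N with hδ
  have hδ0 : 0 < δ := div_pos (by linarith) hN0
  set tj : ℕ → ℝ := fun j => a + j * δ with htj
  have hNδ : (N:ℝ) * δ = b - a := by rw [hδ]; field_simp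
  have htj0 : tj 0 = a := by simp [htj]
  have htjN : tj N = b := by simp only [htj]; rw [hNδ]; ring
  have htjb : ∀ j : ℕ, j ≤ N → a ≤ tj j ∧ tj j ≤ b := by
    intro j hj
    constructor
    · simp only [htj]; nlinarith [Nat.cast_nonneg (α := ℝ) j]
    · simp only [htj]
      have : (j:ℝ) ≤ N := Nat.cast_le.mpr hj
      nlinarith
  have hstep : ∀ j : ℕ, tj (j+1) - tj j = δ := by
    intro j; simp only [htj]; push_cast; ring
  have hintg : ∀ j : ℕ, j < N → IntervalIntegrable X MeasureTheory.volume (tj j) (tj (j+1)) := by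
    intro j hj
    apply MonotoneOn.intervalIntegrable
    apply hmono.mono
    rw [Set.uIcc_of_le (by linarith [hstep j, hδ0] : tj j ≤ tj (j+1))]
    intro z hz
    exact ⟨le_trans (htjb j (le_of_lt hj)).1 hz.1,
      le_trans hz.2 (htjb (j+1) hj).2⟩
  have key1 : ∑ j ∈ Finset.range N, ∫ s in (tj j)..(tj (j+1)), X s = ∫ s in a..b, X s := by
    have := intervalIntegral.sum_integral_adjacent_intervals (a := tj)
      (μ := MeasureTheory.volume) (f := X) (fun k hk => hintg k hk)
    rw [htj0, htjN] at this
    exact this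
  have key2 : ∀ j : ℕ, j < N → (∫ s in (tj j)..(tj (j+1)), X s) ≤ δ * X (tj (j+1)) := by
    intro j hj
    have hle : tj j ≤ tj (j+1) := by linarith [hstep j, hδ0]
    calc (∫ s in (tj j)..(tj (j+1)), X s)
        ≤ ∫ _s in (tj j)..(tj (j+1)), X (tj (j+1)) := by
          apply intervalIntegral.integral_mono_on hle (hintg j hj)
            intervalIntegrable_const
          intro z hz
          exact hmono ⟨le_trans (htjb j hj.le).1 hz.1, le_trans hz.2 (htjb (j+1) hj).2⟩
            ⟨(htjb (j+1) hj).1, (htjb (j+1) hj).2⟩ hz.2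
      _ = δ * X (tj (j+1)) := by
          rw [intervalIntegral.integral_const, hstep j, smul_eq_mul]
  have key3 : ∑ j ∈ Finset.range N, (δ * X (tj (j+1)) - δ * X (tj j))
      = δ * X b - δ * X a := by
    rw [Finset.sum_range_sub (fun j => δ * X (tj j)) N, htj0, htjN]
  have key4 : ∑ j ∈ Finset.range N, δ * X (tj j) ≤ u b - u a := by
    calc ∑ j ∈ Finset.range N, δ * X (tj j)
        ≤ ∑ j ∈ Finset.range N, (u (tj (j+1)) - u (tj j)) := by
          apply Finset.sum_le_sum
          intro j hj
          have hj' := Finset.mem_range.mp hj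
          have := hgrow (tj j) (tj (j+1)) (htjb j hj'.le).1
            (by linarith [hstep j, hδ0]) (htjb (j+1) hj').2
          rw [hstep j] at this
          exact this
      _ = u b - u a := by rw [Finset.sum_range_sub (fun j => u (tj j)) N, htj0, htjN]
  have total : ∫ s in a..b, X s ≤ u b - u a + δ * (X b - X a) := by
    rw [← key1]
    calc ∑ j ∈ Finset.range N, ∫ s in (tj j)..(tj (j+1)), X s
        ≤ ∑ j ∈ Finset.range N, δ * X (tj (j+1)) :=
          Finset.sum_le_sum (fun j hj => key2 j (Finset.mem_range.mp hj))
      _ = ∑ j ∈ Finset.range N, δ * X (tj j) + (δ * X b - δ * X a) := by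
          have := key3
          rw [Finset.sum_sub_distrib] at this
          linarith
      _ ≤ u b - u a + δ * (X b - X a) := by
          have := key4; linarith [mul_sub δ (X b) (X a)]
  have herr : δ * (X b - X a) ≤ ε := by
    rcases le_or_gt (X b - X a) 0 with h | h
    · have : δ * (X b - X a) ≤ 0 := mul_nonpos_of_nonneg_of_nonpos hδ0.le h
      linarith
    · have h2 : (b - a) * (X b - X a) / ε < N := lt_of_le_of_lt (le_max_right _ _) hNgt
      have : (b - a) * (X b - X a) < N * ε := by
        rw [div_lt_iff₀ hε] at h2; linarith
      rw [hδ]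
      rw [div_mul_eq_mul_div, div_le_iff₀ hN0]
      nlinarith
  linarith

end S16
namespace S16

lemma integral_rdivsq {a b : ℝ} (ha : 0 < a) (hab : a ≤ b) :
    ∫ t in a..b, rr / t^2 = rr / a - rr / b := by
  have h : ∀ x ∈ Set.uIcc a b, HasDerivAt (fun t => -(rr / t)) (rr / x^2) x := by
    intro x hx
    rw [Set.uIcc_of_le hab] at hx
    have hx0 : (0:ℝ) < x := lt_of_lt_of_le ha hx.1
    have h1 := (hasDerivAt_inv hx0.ne').const_mul (-rr)
    have h2 : (fun t : ℝ => -(rr / t)) = (fun t : ℝ => -rr * t⁻¹) := by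
      funext t; rw [div_eq_mul_inv]; ring
    have h3 : rr / x^2 = -rr * -(x^2)⁻¹ := by rw [div_eq_mul_inv]; ring
    rw [h2, h3]
    exact h1
  rw [intervalIntegral.integral_eq_sub_of_hasDerivAt h]
  · ring
  · apply ContinuousOn.intervalIntegrable
    apply ContinuousOn.div continuousOn_const ((continuous_pow 2).continuousOn)
    intro x hx
    rw [Set.uIcc_of_le hab] at hx
    have hx0 : (0:ℝ) < x := lt_of_lt_of_le ha hx.1
    positivity

lemma integral_rdiv {a b : ℝ} (ha : 0 < a) (hab : a ≤ b) :
    ∫ t in a..b, rr / t = rr * (Real.log b - Real.log a) := by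
  have h : ∀ x ∈ Set.uIcc a b, HasDerivAt (fun t => rr * Real.log t) (rr / x) x := by
    intro x hx
    rw [Set.uIcc_of_le hab] at hx
    have hx0 : (0:ℝ) < x := lt_of_lt_of_le ha hx.1
    have h1 := (Real.hasDerivAt_log hx0.ne').const_mul rr
    have h3 : rr / x = rr * x⁻¹ := by rw [div_eq_mul_inv]
    rw [h3]
    exact h1
  rw [intervalIntegral.integral_eq_sub_of_hasDerivAt h]
  · ring
  · apply ContinuousOn.intervalIntegrable
    apply ContinuousOn.div continuousOn_const continuousOn_id
    intro x hx
    rw [Set.uIcc_of_le hab] at hx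
    have hx0 : (0:ℝ) < x := lt_of_lt_of_le ha hx.1
    exact hx0.ne'

def fd : ℝ → NNReal := fun t => Set.indicator (Set.Ico rr 1) (fun t => Real.toNNReal (rr / t^2)) t

lemma measurable_fd : Measurable fd :=
  Measurable.indicator (Measurable.real_toNNReal
    (measurable_const.div ((measurable_id (α := ℝ)).pow_const 2))) measurableSet_Ico

def μd : Measure ℝ := MeasureTheory.volume.withDensity (fun t => (fd t : ℝ≥0∞))

def μtar : Measure ℝ := μd + (ENNReal.ofReal rr) • Measure.dirac 1

lemma rdivsq_cont {E : Set ℝ} (hE : E ⊆ Set.Ici rr) : ContinuousOn (fun t => rr / t^2) E := by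
  apply ContinuousOn.div continuousOn_const ((continuous_pow 2).continuousOn)
  intro x hx
  have hx' : rr ≤ x := hE hx
  have hx0 : (0:ℝ) < x := lt_of_lt_of_le rr_pos hx'
  positivity

lemma μd_apply {E : Set ℝ} (hE : MeasurableSet E) :
    μd E = ∫⁻ t in (Set.Ico rr 1) ∩ E, ENNReal.ofReal (rr / t^2) := by
  rw [μd, withDensity_apply _ hE]
  have heq : ∀ t, ((fd t : ℝ≥0∞)) =
      Set.indicator (Set.Ico rr 1) (fun t => ENNReal.ofReal (rr / t^2)) t := by
    intro t
    unfold fd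
    by_cases ht : t ∈ Set.Ico rr 1
    · rw [Set.indicator_of_mem ht, Set.indicator_of_mem ht]; rfl
    · rw [Set.indicator_of_notMem ht, Set.indicator_of_notMem ht]; rfl
  simp_rw [heq]
  rw [lintegral_indicator measurableSet_Ico, Measure.restrict_restrict measurableSet_Ico]

lemma μtar_apply {E : Set ℝ} (hE : MeasurableSet E) :
    μtar E = (∫⁻ t in (Set.Ico rr 1) ∩ E, ENNReal.ofReal (rr / t^2))
      + ENNReal.ofReal rr * (Set.indicator E (fun _ => (1:ℝ≥0∞)) 1) := by
  rw [μtar, Measure.add_apply, μd_apply hE, Measure.smul_apply, smul_eq_mul,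
    Measure.dirac_apply' _ hE]
  rfl

lemma lint_ofReal_eq {E : Set ℝ} (hgi : IntegrableOn (fun t => rr / t^2) E) :
    ∫⁻ t in E, ENNReal.ofReal (rr / t^2) = ENNReal.ofReal (∫ t in E, rr / t^2) := by
  rw [← MeasureTheory.ofReal_integral_eq_lintegral_ofReal hgi
    (MeasureTheory.ae_of_all _ (fun t => div_nonneg rr_pos.le (sq_nonneg t)))]

lemma intOn_rdivsq {E : Set ℝ} (hE' : E ⊆ Set.Icc rr 1) :
    IntegrableOn (fun t => rr / t^2) E := by
  apply MeasureTheory.IntegrableOn.mono_set _ hE'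
  exact (rdivsq_cont (fun x hx => hx.1)).integrableOn_compact isCompact_Icc

lemma μtar_Iic (v : ℝ) : μtar (Set.Iic v) = ENNReal.ofReal (isoCDF rr v) := by
  rw [μtar_apply measurableSet_Iic]
  rcases lt_or_ge v rr with h | h
  · have hempty : Set.Ico rr 1 ∩ Set.Iic v = ∅ := by
      apply Set.eq_empty_iff_forall_notMem.mpr
      rintro t ⟨⟨h1, _⟩, h2⟩
      rw [Set.mem_Iic] at h2
      linarith
    rw [hempty, Set.indicator_of_notMem
      (by rw [Set.mem_Iic]; intro hc; linarith [rr_lt_one] : (1:ℝ) ∉ Set.Iic v)]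
    rw [isoCDF, if_pos h]
    simp
  · rcases lt_or_ge v 1 with h2 | h2
    · have hset : Set.Ico rr 1 ∩ Set.Iic v = Set.Icc rr v := by
        ext t
        simp only [Set.mem_inter_iff, Set.mem_Ico, Set.mem_Iic, Set.mem_Icc]
        constructor
        · rintro ⟨⟨h3, _⟩, h5⟩; exact ⟨h3, h5⟩
        · rintro ⟨h3, h4⟩; exact ⟨⟨h3, by linarith⟩, h4⟩
      have hint : (∫ t in Set.Icc rr v, rr / t^2) = 1 - rr / v := by
        rw [MeasureTheory.integral_Icc_eq_integral_Ioc,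
          ← intervalIntegral.integral_of_le h, integral_rdivsq rr_pos h,
          div_self rr_pos.ne']
      rw [hset, lint_ofReal_eq (intOn_rdivsq (Set.Icc_subset_Icc le_rfl h2.le)), hint]
      rw [Set.indicator_of_notMem
        (by rw [Set.mem_Iic]; intro hc; linarith : (1:ℝ) ∉ Set.Iic v)]
      rw [isoCDF, if_neg (not_lt.mpr h), if_pos h2]
      simp
    · have hset : Set.Ico rr 1 ∩ Set.Iic v = Set.Ico rr 1 := by
        apply Set.inter_eq_left.mpr
        intro t ht
        rw [Set.mem_Iic]
        exact le_trans ht.2.le h2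
      have hint : (∫ t in Set.Ico rr 1, rr / t^2) = 1 - rr := by
        rw [MeasureTheory.integral_Ico_eq_integral_Ioo,
          ← MeasureTheory.integral_Ioc_eq_integral_Ioo,
          ← intervalIntegral.integral_of_le rr_le_one, integral_rdivsq rr_pos rr_le_one,
          div_self rr_pos.ne', div_one]
      rw [hset, lint_ofReal_eq (intOn_rdivsq (fun x hx => ⟨hx.1, hx.2.le⟩)), hint]
      rw [Set.indicator_of_mem (by rw [Set.mem_Iic]; exact h2 : (1:ℝ) ∈ Set.Iic v)]
      rw [isoCDF, if_neg (by intro hc; linarith [rr_lt_one] : ¬ v < rr), if_neg (not_lt.mpr h2)]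
      rw [mul_one, ← ENNReal.ofReal_add (by linarith [rr_lt_one]) rr_pos.le]
      norm_num

lemma μtar_Ioi_one : μtar (Set.Ioi (1:ℝ)) = 0 := by
  rw [μtar_apply measurableSet_Ioi]
  have hemp : Set.Ico rr 1 ∩ Set.Ioi 1 = ∅ := by
    apply Set.eq_empty_iff_forall_notMem.mpr
    rintro t ⟨⟨_, h⟩, h'⟩
    rw [Set.mem_Ioi] at h'
    linarith
  rw [hemp, Set.indicator_of_notMem (by simp : (1:ℝ) ∉ Set.Ioi 1)]
  simp

instance : IsFiniteMeasure μtar := by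
  constructor
  calc μtar Set.univ = μtar (Set.Iic 1 ∪ Set.Ioi 1) := by rw [Set.Iic_union_Ioi]
    _ ≤ μtar (Set.Iic 1) + μtar (Set.Ioi 1) := measure_union_le _ _
    _ < ⊤ := by
        rw [μtar_Iic 1, μtar_Ioi_one, add_zero]
        exact ENNReal.ofReal_lt_top

end S16
namespace S16

lemma integrable_of_bdd {μ : Measure ℝ} [IsFiniteMeasure μ] {g : ℝ → ℝ}
    (hg : Measurable g) {C : ℝ} (hb : ∀ t, |g t| ≤ C) : Integrable g μ :=
  ⟨hg.aestronglyMeasurable,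
    MeasureTheory.HasFiniteIntegral.of_bounded
      (MeasureTheory.ae_of_all _ (fun t => by simpa [Real.norm_eq_abs] using hb t))⟩

lemma rdivsq_le {t : ℝ} (ht : rr ≤ t) : rr / t^2 ≤ 1 / rr := by
  have h0 : (0:ℝ) < t := lt_of_lt_of_le rr_pos ht
  rw [div_le_div_iff₀ (by positivity) rr_pos]
  nlinarith [rr_pos]

lemma fd_smul_eq (g : ℝ → ℝ) :
    (fun t => fd t • g t) = Set.indicator (Set.Ico rr 1) (fun t => (rr / t^2) * g t) := by
  funext t
  unfold fd
  by_cases ht : t ∈ Set.Ico rr 1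
  · rw [Set.indicator_of_mem ht, Set.indicator_of_mem ht, NNReal.smul_def,
      Real.coe_toNNReal _ (div_nonneg rr_pos.le (sq_nonneg t)), smul_eq_mul]
  · rw [Set.indicator_of_notMem ht, Set.indicator_of_notMem ht, zero_smul]

lemma integrableOn_weighted {g : ℝ → ℝ} (hg : Measurable g) {C : ℝ} (hb : ∀ t, |g t| ≤ C) :
    IntegrableOn (fun t => (rr / t^2) * g t) (Set.Ico rr 1) MeasureTheory.volume := by
  haveI : IsFiniteMeasure (MeasureTheory.volume.restrict (Set.Ico rr 1)) := by
    constructor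
    rw [Measure.restrict_apply_univ, Real.volume_Ico]
    exact ENNReal.ofReal_lt_top
  have hC0 : 0 ≤ C := le_trans (abs_nonneg _) (hb 0)
  refine ⟨(((measurable_const.div ((measurable_id (α := ℝ)).pow_const 2)).mul hg)).aestronglyMeasurable, ?_⟩
  apply MeasureTheory.HasFiniteIntegral.of_bounded (C := (1/rr) * C)
  rw [MeasureTheory.ae_restrict_iff' measurableSet_Ico]
  apply MeasureTheory.ae_of_all
  intro t ht
  rw [Real.norm_eq_abs, abs_mul, abs_of_nonneg (div_nonneg rr_pos.le (sq_nonneg t))]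
  exact mul_le_mul (rdivsq_le ht.1) (hb t) (abs_nonneg _) (one_div_pos.mpr rr_pos).le

lemma integrable_μd {g : ℝ → ℝ} (hg : Measurable g) {C : ℝ} (hb : ∀ t, |g t| ≤ C) :
    Integrable g μd := by
  rw [μd, integrable_withDensity_iff_integrable_smul measurable_fd]
  rw [fd_smul_eq g]
  rw [integrable_indicator_iff measurableSet_Ico]
  exact integrableOn_weighted hg hb

lemma integrable_mutar {g : ℝ → ℝ} (hg : Measurable g) {C : ℝ} (hb : ∀ t, |g t| ≤ C) :
    Integrable g μtar := by
  rw [μtar]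
  apply Integrable.add_measure (integrable_μd hg hb)
  exact (integrable_of_bdd hg hb).smul_measure ENNReal.ofReal_ne_top

lemma integral_mutar (g : ℝ → ℝ) (hg : Measurable g) {C : ℝ} (hb : ∀ t, |g t| ≤ C) :
    ∫ t, g t ∂μtar = (∫ t in Set.Ico rr 1, (rr / t^2) * g t) + rr * g 1 := by
  rw [μtar, MeasureTheory.integral_add_measure (integrable_μd hg hb)
    ((integrable_of_bdd hg hb).smul_measure ENNReal.ofReal_ne_top)]
  rw [MeasureTheory.integral_smul_measure, MeasureTheory.integral_dirac,
    ENNReal.toReal_ofReal rr_pos.le, smul_eq_mul]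
  congr 1
  rw [μd, integral_withDensity_eq_integral_smul measurable_fd,
    fd_smul_eq g, MeasureTheory.integral_indicator measurableSet_Ico]

lemma ae_mutar : ∀ᵐ t ∂μtar, t ∈ Set.Ico rr 1 ∪ {1} := by
  have hms : MeasurableSet (Set.Ico rr 1 ∪ {(1:ℝ)}) :=
    measurableSet_Ico.union (measurableSet_singleton 1)
  rw [MeasureTheory.ae_iff]
  have : {t : ℝ | ¬ t ∈ Set.Ico rr 1 ∪ {1}} = (Set.Ico rr 1 ∪ {(1:ℝ)})ᶜ := rfl
  rw [this, μtar_apply hms.compl]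
  have h1 : Set.Ico rr 1 ∩ (Set.Ico rr 1 ∪ {(1:ℝ)})ᶜ = ∅ := by
    apply Set.eq_empty_iff_forall_notMem.mpr
    rintro t ⟨ht, htc⟩
    exact htc (Set.mem_union_left _ ht)
  have h2 : (1:ℝ) ∉ (Set.Ico rr 1 ∪ {(1:ℝ)})ᶜ := by
    intro hc
    exact hc (Set.mem_union_right _ rfl)
  rw [h1, Set.indicator_of_notMem h2]
  simp

end S16
namespace S16

lemma vol_Ico_fin (a b : ℝ) : IsFiniteMeasure (MeasureTheory.volume.restrict (Set.Ico a b)) := by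
  constructor
  rw [Measure.restrict_apply_univ, Real.volume_Ico]
  exact ENNReal.ofReal_lt_top

lemma vol_Icc_fin (a b : ℝ) : IsFiniteMeasure (MeasureTheory.volume.restrict (Set.Icc a b)) := by
  constructor
  rw [Measure.restrict_apply_univ, Real.volume_Icc]
  exact ENNReal.ofReal_lt_top

lemma integral_rdivsq_Ico {s : ℝ} (hs : rr ≤ s) (hs1 : s ≤ 1) :
    ∫ t in Set.Ico s 1, rr / t^2 = rr / s - rr := by
  rw [MeasureTheory.integral_Ico_eq_integral_Ioo, ← MeasureTheory.integral_Ioc_eq_integral_Ioo,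
    ← intervalIntegral.integral_of_le hs1,
    integral_rdivsq (lt_of_lt_of_le rr_pos hs) hs1, div_one]

lemma fubini_step {X : ℝ → ℝ} (hX : Measurable X) (hb : ∀ t, |X t| ≤ 1) :
    ∫ t in Set.Ico rr 1, (rr / t^2) * (∫ s in Set.Icc rr t, X s) =
      ∫ s in Set.Icc rr 1, (rr / s - rr) * X s := by
  haveI := vol_Ico_fin rr 1
  haveI := vol_Icc_fin rr 1
  set F : ℝ → ℝ → ℝ := fun t s => if s ≤ t then (rr / (max t rr)^2) * X s else 0 with hF
  have hFm : Measurable (Function.uncurry F) := by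
    apply Measurable.ite (measurableSet_le measurable_snd measurable_fst)
    · exact (measurable_const.div (((measurable_fst.max measurable_const)).pow_const 2)).mul
        (hX.comp measurable_snd)
    · exact measurable_const
  have hFb : ∀ z : ℝ × ℝ, |Function.uncurry F z| ≤ 1/rr := by
    rintro ⟨t, s⟩
    simp only [Function.uncurry, hF]
    split_ifs with h
    · rw [abs_mul, abs_of_nonneg (div_nonneg rr_pos.le (sq_nonneg _))]
      calc rr / (max t rr)^2 * |X s| ≤ (1/rr) * 1 :=
            mul_le_mul (rdivsq_le (le_max_right t rr)) (hb s) (abs_nonneg _)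
              (one_div_pos.mpr rr_pos).le
        _ = 1/rr := by ring
    · rw [abs_zero]; exact (one_div_pos.mpr rr_pos).le
  have hFi : Integrable (Function.uncurry F)
      ((MeasureTheory.volume.restrict (Set.Ico rr 1)).prod
        (MeasureTheory.volume.restrict (Set.Icc rr 1))) := by
    refine ⟨hFm.aestronglyMeasurable, ?_⟩
    apply MeasureTheory.HasFiniteIntegral.of_bounded (C := 1/rr)
    apply MeasureTheory.ae_of_all
    intro z
    rw [Real.norm_eq_abs]
    exact hFb z
  have hswap := MeasureTheory.integral_integral_swap hFi
  have hL : (∫ t in Set.Ico rr 1, ∫ s in Set.Icc rr 1, F t s) =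
      ∫ t in Set.Ico rr 1, (rr / t^2) * (∫ s in Set.Icc rr t, X s) := by
    apply MeasureTheory.setIntegral_congr_fun measurableSet_Ico
    intro t ht
    show (∫ s in Set.Icc rr 1, F t s) = rr / t^2 * ∫ s in Set.Icc rr t, X s
    have hmax : max t rr = t := max_eq_left ht.1
    have h1 : (fun s => F t s) =
        Set.indicator (Set.Iic t) (fun s => (rr / t^2) * X s) := by
      funext s
      rw [Set.indicator_apply]
      simp only [hF, Set.mem_Iic, hmax]
    rw [h1, MeasureTheory.setIntegral_indicator measurableSet_Iic]
    have h2 : Set.Icc rr 1 ∩ Set.Iic t = Set.Icc rr t := by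
      ext z
      simp only [Set.mem_inter_iff, Set.mem_Icc, Set.mem_Iic]
      constructor
      · rintro ⟨⟨hz1, _⟩, hz3⟩; exact ⟨hz1, hz3⟩
      · rintro ⟨hz1, hz2⟩; exact ⟨⟨hz1, le_trans hz2 ht.2.le⟩, hz2⟩
    rw [h2, MeasureTheory.integral_const_mul]
  have hR : (∫ s in Set.Icc rr 1, ∫ t in Set.Ico rr 1, F t s) =
      ∫ s in Set.Icc rr 1, (rr / s - rr) * X s := by
    apply MeasureTheory.setIntegral_congr_fun measurableSet_Icc
    intro s hs
    show (∫ t in Set.Ico rr 1, F t s) = (rr / s - rr) * X s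
    have h1 : (fun t => F t s) =
        Set.indicator (Set.Ici s) (fun t => (rr / (max t rr)^2) * X s) := by
      funext t
      rw [Set.indicator_apply]
      simp only [hF, Set.mem_Ici]
    rw [h1, MeasureTheory.setIntegral_indicator measurableSet_Ici]
    have h2 : Set.Ico rr 1 ∩ Set.Ici s = Set.Ico s 1 := by
      ext z
      simp only [Set.mem_inter_iff, Set.mem_Ico, Set.mem_Ici]
      constructor
      · rintro ⟨⟨_, hz2⟩, hz3⟩; exact ⟨hz3, hz2⟩
      · rintro ⟨hz1, hz2⟩; exact ⟨⟨le_trans hs.1 hz1, hz2⟩, hz1⟩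
    rw [h2]
    have h3 : ∀ z ∈ Set.Ico s 1, (rr / (max z rr)^2) * X s = (rr / z^2) * X s := by
      intro z hz
      rw [max_eq_left (le_trans hs.1 hz.1)]
    rw [MeasureTheory.setIntegral_congr_fun measurableSet_Ico h3,
      MeasureTheory.integral_mul_const, integral_rdivsq_Ico hs.1 hs.2]
  rw [← hL, hswap, hR]

end S16
namespace S16

lemma integrableOn_of_bdd {s : Set ℝ} (hs : MeasurableSet s)
    [IsFiniteMeasure (MeasureTheory.volume.restrict s)] {g : ℝ → ℝ}
    (hg : Measurable g) {C : ℝ} (hb : ∀ t ∈ s, |g t| ≤ C) :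
    IntegrableOn g s MeasureTheory.volume :=
  ⟨hg.aestronglyMeasurable,
    MeasureTheory.HasFiniteIntegral.of_bounded
      ((MeasureTheory.ae_restrict_iff' hs).mpr
        (MeasureTheory.ae_of_all _ (fun t ht => by
          simpa [Real.norm_eq_abs] using hb t ht)))⟩

lemma integrableOn_weighted' {g : ℝ → ℝ} (hg : Measurable g) {C : ℝ}
    (hb : ∀ t ∈ Set.Ico rr 1, |g t| ≤ C) :
    IntegrableOn (fun t => (rr / t^2) * g t) (Set.Ico rr 1) MeasureTheory.volume := by
  haveI := vol_Ico_fin rr 1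
  have hC0 : 0 ≤ C := le_trans (abs_nonneg _) (hb rr ⟨le_rfl, rr_lt_one⟩)
  refine ⟨(((measurable_const.div ((measurable_id (α := ℝ)).pow_const 2)).mul
    hg)).aestronglyMeasurable, ?_⟩
  apply MeasureTheory.HasFiniteIntegral.of_bounded (C := (1/rr) * C)
  rw [MeasureTheory.ae_restrict_iff' measurableSet_Ico]
  apply MeasureTheory.ae_of_all
  intro t ht
  rw [Real.norm_eq_abs, abs_mul, abs_of_nonneg (div_nonneg rr_pos.le (sq_nonneg t))]
  exact mul_le_mul (rdivsq_le ht.1) (hb t ht) (abs_nonneg _) (one_div_pos.mpr rr_pos).le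

lemma revenue_le {X q : ℝ → ℝ} (hXm : Measurable X) (hq : Measurable q) {C : ℝ}
    (hqb : ∀ t, |q t| ≤ C)
    (hX0 : ∀ t ∈ Set.Icc (0:ℝ) 1, 0 ≤ X t) (hX1 : ∀ t ∈ Set.Icc (0:ℝ) 1, X t ≤ 1)
    (hIR : ∀ t ∈ Set.Icc (0:ℝ) 1, 0 ≤ t * X t - q t)
    (hIC : ∀ s ∈ Set.Icc (0:ℝ) 1, ∀ t ∈ Set.Icc (0:ℝ) 1,
      s * X t - q t ≤ s * X s - q s) :
    ∫ t, q t ∂μtar ≤ rr := by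
  set X' : ℝ → ℝ := fun t => max 0 (min (X t) 1) with hX'
  have hX'm : Measurable X' := measurable_const.max ((hXm.min measurable_const))
  have hX'b : ∀ t, |X' t| ≤ 1 := by
    intro t
    rw [abs_of_nonneg (le_max_left _ _)]
    exact max_le zero_le_one (min_le_right _ _)
  have hX'eq : ∀ t ∈ Set.Icc (0:ℝ) 1, X' t = X t := by
    intro t ht
    rw [hX']
    simp only []
    rw [min_eq_left (hX1 t ht), max_eq_right (hX0 t ht)]
  have hXmono : ∀ s ∈ Set.Icc (0:ℝ) 1, ∀ t ∈ Set.Icc (0:ℝ) 1, s ≤ t → X s ≤ X t := by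
    intro s hs t ht hst
    rcases eq_or_lt_of_le hst with rfl | hlt
    · exact le_rfl
    · have h1 := hIC s hs t ht
      have h2 := hIC t ht s hs
      nlinarith
  have hX'mono : MonotoneOn X' (Set.Icc (0:ℝ) 1) := by
    intro s hs t ht hst
    have := hXmono s hs t ht hst
    exact max_le_max le_rfl (min_le_min this le_rfl)
  have hIcc : ∀ t : ℝ, rr ≤ t → t ≤ 1 → t ∈ Set.Icc (0:ℝ) 1 :=
    fun t h1 h2 => ⟨le_trans rr_pos.le h1, h2⟩
  -- interval integrability of X'
  have hX'int : ∀ a b : ℝ, IntervalIntegrable X' MeasureTheory.volume a b := by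
    intro a b
    rw [intervalIntegrable_iff]
    haveI : IsFiniteMeasure (MeasureTheory.volume.restrict (Set.uIoc a b)) := by
      constructor
      rw [Measure.restrict_apply_univ, Set.uIoc, Real.volume_Ioc]
      exact ENNReal.ofReal_lt_top
    exact integrable_of_bdd hX'm hX'b
  set W : ℝ → ℝ := fun t => ∫ s in rr..t, X' s with hW
  have hWcont : Continuous W := intervalIntegral.continuous_primitive hX'int rr
  have hWb : ∀ t ∈ Set.Icc rr 1, |W t| ≤ 1 := by
    intro t ht
    have := intervalIntegral.norm_integral_le_of_norm_le_const
      (C := 1) (f := X') (a := rr) (b := t)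
      (fun x _ => by rw [Real.norm_eq_abs]; exact hX'b x)
    rw [Real.norm_eq_abs] at this
    calc |W t| ≤ 1 * |t - rr| := this
      _ ≤ 1 := by rw [one_mul, abs_of_nonneg (by linarith [ht.1])]; linarith [ht.2, rr_pos]
  -- key: W t ≤ u t - u rr for t ∈ [rr, 1], where u t = t * X t - q t
  set u : ℝ → ℝ := fun t => t * X t - q t with hu
  have hgrow : ∀ t, rr ≤ t → t ≤ 1 → W t ≤ u t - u rr := by
    intro t h1 h2
    apply integral_le_sub h1
    · apply hX'mono.mono
      intro z hz
      exact hIcc z hz.1 (le_trans hz.2 h2)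
    · intro s t' hs hst' ht'
      have hs' := hIcc s hs (le_trans (le_trans hst' ht') h2)
      have ht'' := hIcc t' (le_trans hs hst') (le_trans ht' h2)
      have hic := hIC t' ht'' s hs'
      rw [hX'eq s hs']
      simp only [hu]
      nlinarith
  have hqle : ∀ t, rr ≤ t → t ≤ 1 → q t ≤ t * X' t - W t := by
    intro t h1 h2
    have hur : 0 ≤ u rr := hIR rr (hIcc rr le_rfl rr_le_one)
    have hg2 := hgrow t h1 h2
    rw [hX'eq t (hIcc t h1 h2)]
    simp only [hu] at hg2 hur ⊢
    linarith
  -- decompose the integral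
  rw [integral_mutar q hq hqb]
  -- bound the atom part
  have hatom : rr * q 1 ≤ rr * (X' 1 - W 1) := by
    apply mul_le_mul_of_nonneg_left _ rr_pos.le
    have := hqle 1 rr_le_one le_rfl
    linarith [this]
  -- bound the density part
  have hTX : ∀ t ∈ Set.Ico rr 1, |t * X' t| ≤ 1 := by
    intro t ht
    rw [abs_mul]
    have htt : |t| ≤ 1 := by
      rw [abs_of_nonneg (le_trans rr_pos.le ht.1)]; exact ht.2.le
    calc |t| * |X' t| ≤ 1 * 1 := mul_le_mul htt (hX'b t) (abs_nonneg _) zero_le_one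
      _ = 1 := one_mul 1
  have hXw : ∀ t ∈ Set.Ico rr 1, |t * X' t - W t| ≤ 2 := by
    intro t ht
    have h2 := hWb t ⟨ht.1, ht.2.le⟩
    calc |t * X' t - W t| ≤ |t * X' t| + |W t| := abs_sub _ _
      _ ≤ 2 := by linarith [hTX t ht]
  have hdens : (∫ t in Set.Ico rr 1, (rr / t^2) * q t) ≤
      ∫ t in Set.Ico rr 1, (rr / t^2) * (t * X' t - W t) := by
    apply MeasureTheory.setIntegral_mono_on
    · exact integrableOn_weighted' hq (fun t _ => hqb t)
    · exact integrableOn_weighted' ((measurable_id.mul hX'm).sub hWcont.measurable) hXw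
    · exact measurableSet_Ico
    · intro t ht
      exact mul_le_mul_of_nonneg_left (hqle t ht.1 ht.2.le)
        (div_nonneg rr_pos.le (sq_nonneg t))
  -- compute the density part
  have hsplit : (∫ t in Set.Ico rr 1, (rr / t^2) * (t * X' t - W t)) =
      (∫ t in Set.Ico rr 1, (rr / t^2) * (t * X' t)) -
      ∫ t in Set.Ico rr 1, (rr / t^2) * W t := by
    rw [← MeasureTheory.integral_sub]
    · apply MeasureTheory.setIntegral_congr_fun measurableSet_Ico
      intro t _
      ring
    · exact integrableOn_weighted' (measurable_id.mul hX'm) hTX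
    · exact integrableOn_weighted' hWcont.measurable
        (fun t ht => hWb t ⟨ht.1, ht.2.le⟩)
  -- Fubini for the W-part
  have hWIcc : ∀ t ∈ Set.Ico rr 1, W t = ∫ s in Set.Icc rr t, X' s := by
    intro t ht
    rw [hW]
    simp only []
    rw [intervalIntegral.integral_of_le ht.1, ← MeasureTheory.integral_Icc_eq_integral_Ioc]
  have hfub : (∫ t in Set.Ico rr 1, (rr / t^2) * W t) =
      ∫ s in Set.Icc rr 1, (rr / s - rr) * X' s := by
    rw [← fubini_step hX'm hX'b]
    apply MeasureTheory.setIntegral_congr_fun measurableSet_Ico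
    intro t ht
    show rr / t^2 * W t = rr / t^2 * ∫ s in Set.Icc rr t, X' s
    rw [hWIcc t ht]
  -- identify the first part with the Icc integral
  have hfirst : (∫ t in Set.Ico rr 1, (rr / t^2) * (t * X' t)) =
      ∫ s in Set.Icc rr 1, (rr / s) * X' s := by
    rw [MeasureTheory.integral_Icc_eq_integral_Ico]
    apply MeasureTheory.setIntegral_congr_fun measurableSet_Ico
    intro t ht
    have ht0 : t ≠ 0 := (lt_of_lt_of_le rr_pos ht.1).ne'
    field_simp
  -- expand (rr/s - rr) * X'
  have hexp : (∫ s in Set.Icc rr 1, (rr / s - rr) * X' s) =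
      (∫ s in Set.Icc rr 1, (rr / s) * X' s) - rr * ∫ s in Set.Icc rr 1, X' s := by
    haveI := vol_Icc_fin rr 1
    rw [← MeasureTheory.integral_const_mul, ← MeasureTheory.integral_sub]
    · apply MeasureTheory.setIntegral_congr_fun measurableSet_Icc
      intro s _
      ring
    · apply integrableOn_of_bdd measurableSet_Icc
        ((measurable_const.div measurable_id).mul hX'm) (C := 1)
      intro t ht
      show |rr / t * X' t| ≤ 1
      rw [abs_mul]
      have h1 : |rr / t| ≤ 1 := by
        rw [abs_of_nonneg (div_nonneg rr_pos.le (le_trans rr_pos.le ht.1))]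
        rw [div_le_one (lt_of_lt_of_le rr_pos ht.1)]
        exact ht.1
      calc |rr / t| * |X' t| ≤ 1 * 1 := mul_le_mul h1 (hX'b t) (abs_nonneg _) zero_le_one
        _ = 1 := one_mul 1
    · exact integrable_of_bdd (measurable_const.mul hX'm) (C := rr)
        (fun t => by
          rw [abs_mul, abs_of_nonneg rr_pos.le]
          calc rr * |X' t| ≤ rr * 1 := mul_le_mul_of_nonneg_left (hX'b t) rr_pos.le
            _ = rr := mul_one rr)
  -- W 1 = ∫ Icc
  have hW1 : W 1 = ∫ s in Set.Icc rr 1, X' s := by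
    rw [hW]
    simp only []
    rw [intervalIntegral.integral_of_le rr_le_one, ← MeasureTheory.integral_Icc_eq_integral_Ioc]
  have hX'1 : X' 1 ≤ 1 := (abs_le.mp (hX'b 1)).2
  calc (∫ t in Set.Ico rr 1, (rr / t^2) * q t) + rr * q 1
      ≤ (∫ t in Set.Ico rr 1, (rr / t^2) * (t * X' t - W t)) + rr * (X' 1 - W 1) := by
        linarith [hdens, hatom]
    _ = rr * X' 1 := by
        rw [hsplit, hfub, hfirst, hexp, hW1]
        ring
    _ ≤ rr := by nlinarith [rr_pos]

end S16
namespace S16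
variable {n : ℕ}

def ek (n : ℕ) (k : Fin n) : ℝ → (Fin n → ℝ) := fun t i => if i = k then t else 0

lemma measurable_ek (k : Fin n) : Measurable (ek n k) := by
  apply measurable_pi_lambda
  intro i
  by_cases h : i = k
  · simp only [ek, h, if_true]; exact measurable_id
  · simp only [ek, h, if_false]; exact measurable_const

lemma ek_apply_self (k : Fin n) (t : ℝ) : ek n k t k = t := by simp [ek]

lemma ek_mem_Icc {k : Fin n} {t : ℝ} (h0 : 0 ≤ t) (h1 : t ≤ 1) :
    ek n k t ∈ Set.Icc (0 : Fin n → ℝ) 1 := by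
  constructor
  · intro i
    by_cases h : i = k <;> simp [ek, h, h0]
  · intro i
    by_cases h : i = k <;> simp [ek, h, h1]

lemma top1_ek {k : Fin n} {t : ℝ} (h0 : 0 ≤ t) : top1 (ek n k t) = t := by
  have : ∀ j, ek n k t j ≤ ek n k t k := by
    intro j
    by_cases h : j = k <;> simp [ek, h, h0]
  rw [top1_eq this, ek_apply_self]

lemma update_ek (k : Fin n) (s t : ℝ) :
    Function.update (ek n k s) k t = ek n k t := by
  funext i
  by_cases h : i = k
  · subst h; rw [Function.update_self, ek_apply_self]
  · rw [Function.update_of_ne h]; simp [ek, h]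

lemma measSet_IccPi : MeasurableSet (Set.Icc (0 : Fin n → ℝ) 1) := by
  have h : Set.Icc (0 : Fin n → ℝ) 1 = ⋂ i, {v : Fin n → ℝ | 0 ≤ v i ∧ v i ≤ 1} := by
    ext v
    simp only [Set.mem_Icc, Set.mem_iInter, Set.mem_setOf_eq, Pi.le_def, forall_and]
    constructor
    · rintro ⟨h1, h2⟩; exact ⟨fun i => by simpa using h1 i, fun i => by simpa using h2 i⟩
    · rintro ⟨h1, h2⟩
      exact ⟨fun i => by simpa using h1 i, fun i => by simpa using h2 i⟩
  rw [h]
  exact MeasurableSet.iInter fun i =>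
    ((measurableSet_le measurable_const (measurable_pi_apply i)).inter
      (measurableSet_le (measurable_pi_apply i) measurable_const))

lemma measurable_top1 (hn : 1 ≤ n) : Measurable (top1 (n := n)) := by
  haveI : Nonempty (Fin n) := ⟨⟨0, by omega⟩⟩
  apply measurable_of_Iic
  intro a
  have h : top1 (n := n) ⁻¹' Set.Iic a = ⋂ i, {v : Fin n → ℝ | v i ≤ a} := by
    ext v
    simp only [Set.mem_preimage, Set.mem_Iic, Set.mem_iInter, Set.mem_setOf_eq]
    constructor
    · intro h i
      exact le_trans (le_ciSup (Set.Finite.bddAbove (Set.finite_range v)) i) h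
    · intro h
      exact ciSup_le h
  rw [h]
  exact MeasurableSet.iInter fun i =>
    measurableSet_le (measurable_pi_apply i) measurable_const

lemma restrict_self_of_compl_null {α : Type*} [MeasurableSpace α] (μ : Measure α)
    {s : Set α} (h : μ sᶜ = 0) : μ.restrict s = μ := by
  apply Measure.restrict_eq_self_of_ae_mem
  rw [MeasureTheory.ae_iff]
  exact h

lemma ν_compl_null (ν : Measure ℝ) (hνeq : ν = μtar) : ν ((Set.Icc (0:ℝ) 1)ᶜ) = 0 := by
  rw [hνeq]
  apply measure_mono_null (Set.compl_subset_compl.mpr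
    (show Set.Ico rr 1 ∪ {1} ⊆ Set.Icc (0:ℝ) 1 from ?_))
  · have := ae_mutar
    rw [MeasureTheory.ae_iff] at this
    exact this
  · rintro t (ht | ht)
    · exact ⟨le_trans rr_pos.le ht.1, ht.2.le⟩
    · rw [Set.mem_singleton_iff] at ht
      subst ht
      exact ⟨zero_le_one, le_rfl⟩

/-- the clamp of the identity -/
def clid : ℝ → ℝ := fun t => max 0 (min t 1)

lemma clid_eq {t : ℝ} (h0 : 0 ≤ t) (h1 : t ≤ 1) : clid t = t := by
  unfold clid; rw [min_eq_left h1, max_eq_right h0]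

lemma measurable_clid : Measurable clid :=
  measurable_const.max (measurable_id.min measurable_const)

lemma clid_bd (t : ℝ) : |clid t| ≤ 1 := by
  unfold clid
  rw [abs_of_nonneg (le_max_left _ _)]
  exact max_le zero_le_one (min_le_right _ _)

lemma integral_clid : ∫ t, clid t ∂μtar = 2 * rr := by
  rw [integral_mutar clid measurable_clid clid_bd]
  have h1 : clid 1 = 1 := clid_eq zero_le_one le_rfl
  have h2 : (∫ t in Set.Ico rr 1, (rr / t^2) * clid t) = ∫ t in Set.Ico rr 1, rr / t := by
    apply MeasureTheory.setIntegral_congr_fun measurableSet_Ico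
    intro t ht
    have ht0 : (0:ℝ) < t := lt_of_lt_of_le rr_pos ht.1
    show rr / t^2 * clid t = rr / t
    rw [clid_eq ht0.le ht.2.le]
    field_simp
  rw [h1, h2]
  have h3 : (∫ t in Set.Ico rr 1, rr / t) = rr := by
    rw [MeasureTheory.integral_Ico_eq_integral_Ioo, ← MeasureTheory.integral_Ioc_eq_integral_Ioo,
      ← intervalIntegral.integral_of_le rr_le_one, integral_rdiv rr_pos rr_le_one,
      Real.log_one, log_rr]
    ring
  rw [h3]
  ring

/-- Main lower bound : any DSIC mechanism has regret at least rr against F^*. -/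
lemma part1 (hn : 1 ≤ n) (ν : Measure ℝ) [IsProbabilityMeasure ν]
    (hν : ∀ v : ℝ, ν (Set.Iic v) = ENNReal.ofReal (isoCDF rr v))
    {x p : (Fin n → ℝ) → Fin n → ℝ} (hD : DSIC n x p) :
    rr ≤ mechRegret n p ((n : ℝ≥0∞)⁻¹ • ∑ k : Fin n, Measure.map (ek n k) ν) := by
  obtain ⟨hxm, hpm, ⟨C, hC⟩, hcond⟩ := hD
  have hνeq : ν = μtar := Measure.ext_of_Iic ν μtar (fun a => by rw [hν a, μtar_Iic])
  have hνIcc : ν ((Set.Icc (0:ℝ) 1)ᶜ) = 0 := ν_compl_null ν hνeq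
  set f : (Fin n → ℝ) → ℝ := fun v => top1 v - ∑ i, p v i with hf
  have hfm : Measurable f :=
    (measurable_top1 hn).sub (Finset.measurable_sum _ fun i _ =>
      (measurable_pi_apply i).comp hpm)
  -- the mixture measure
  set G : Measure (Fin n → ℝ) :=
    (n : ℝ≥0∞)⁻¹ • ∑ k : Fin n, Measure.map (ek n k) ν with hG
  have hpre : ∀ k : Fin n, (ek n k) ⁻¹' (Set.Icc (0:Fin n → ℝ) 1) = Set.Icc (0:ℝ) 1 := by
    intro k
    ext t
    simp only [Set.mem_preimage, Set.mem_Icc]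
    constructor
    · intro h
      have h0 := h.1 k
      have h1 := h.2 k
      rw [ek_apply_self] at h0 h1
      exact ⟨by simpa using h0, by simpa using h1⟩
    · intro h
      exact ek_mem_Icc h.1 h.2
  have hGcompl : G ((Set.Icc (0:Fin n → ℝ) 1)ᶜ) = 0 := by
    rw [hG, Measure.smul_apply, Measure.finset_sum_apply]
    have : ∀ k ∈ Finset.univ, (Measure.map (ek n k) ν) ((Set.Icc (0:Fin n → ℝ) 1)ᶜ) = 0 := by
      intro k _
      rw [Measure.map_apply (measurable_ek k) measSet_IccPi.compl]
      rw [Set.preimage_compl, hpre k]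
      exact hνIcc
    rw [Finset.sum_congr rfl this]
    simp
  -- per-component payment and allocation
  have hmain : ∀ k : Fin n, rr ≤ ∫ t, f (ek n k t) ∂ν := by
    intro k
    set q : ℝ → ℝ := fun t => p (ek n k t) k with hq
    set X : ℝ → ℝ := fun t => x (ek n k t) k with hX
    have hqm : Measurable q := ((measurable_pi_apply k).comp hpm).comp (measurable_ek k)
    have hXm : Measurable X := ((measurable_pi_apply k).comp hxm).comp (measurable_ek k)
    have hqb : ∀ t, |q t| ≤ C := fun t => hC _ k
    have hIRx : ∀ t ∈ Set.Icc (0:ℝ) 1, 0 ≤ t * X t - q t := by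
      intro t ht
      have h := ((hcond (ek n k t) (ek_mem_Icc ht.1 ht.2)).2 k).2.1
      rwa [ek_apply_self] at h
    have hX0 : ∀ t ∈ Set.Icc (0:ℝ) 1, 0 ≤ X t := by
      intro t ht
      exact ((hcond (ek n k t) (ek_mem_Icc ht.1 ht.2)).2 k).1
    have hX1 : ∀ t ∈ Set.Icc (0:ℝ) 1, X t ≤ 1 := by
      intro t ht
      have hsum := (hcond (ek n k t) (ek_mem_Icc ht.1 ht.2)).1
      have hle : x (ek n k t) k ≤ ∑ j, x (ek n k t) j := by
        apply Finset.single_le_sum (f := fun j => x (ek n k t) j)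
        · intro i _
          exact ((hcond (ek n k t) (ek_mem_Icc ht.1 ht.2)).2 i).1
        · exact Finset.mem_univ k
      exact le_trans hle hsum
    have hIC : ∀ s ∈ Set.Icc (0:ℝ) 1, ∀ t ∈ Set.Icc (0:ℝ) 1,
        s * X t - q t ≤ s * X s - q s := by
      intro s hs t ht
      have h := ((hcond (ek n k s) (ek_mem_Icc hs.1 hs.2)).2 k).2.2 t ht
      rw [update_ek, ek_apply_self] at h
      exact h
    -- revenue
    have hrev : ∫ t, q t ∂μtar ≤ rr :=
      revenue_le hXm hqm hqb hX0 hX1 hIRx hIC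
    -- total payment ≤ q  a.e.
    have hC0 : 0 ≤ C := le_trans (abs_nonneg _) (hqb 0)
    set S : ℝ → ℝ := fun t => ∑ i, p (ek n k t) i with hS
    have hSm : Measurable S := Finset.measurable_sum _ fun i _ =>
      ((measurable_pi_apply i).comp hpm).comp (measurable_ek k)
    have hSb : ∀ t, |S t| ≤ n * C := by
      intro t
      calc |S t| ≤ ∑ i, |p (ek n k t) i| := Finset.abs_sum_le_sum_abs _ _
        _ ≤ ∑ _i : Fin n, C := Finset.sum_le_sum fun i _ => hC _ i
        _ = n * C := by rw [Finset.sum_const, Finset.card_univ, Fintype.card_fin,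
            nsmul_eq_mul]
    have hSle : ∀ t ∈ Set.Icc (0:ℝ) 1, S t ≤ q t := by
      intro t ht
      have hv := hcond (ek n k t) (ek_mem_Icc ht.1 ht.2)
      have : ∀ i, i ≠ k → p (ek n k t) i ≤ 0 := by
        intro i hik
        have h := (hv.2 i).2.1
        have hzero : ek n k t i = 0 := by simp [ek, hik]
        rw [hzero, zero_mul, zero_sub] at h
        linarith
      calc S t = p (ek n k t) k + ∑ i ∈ Finset.univ.erase k, p (ek n k t) i := by
            rw [hS]
            exact (Finset.add_sum_erase _ _ (Finset.mem_univ k)).symm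
        _ ≤ q t + 0 := by
            apply add_le_add le_rfl
            apply Finset.sum_nonpos
            intro i hi
            exact this i (Finset.mem_erase.mp hi).1
        _ = q t := add_zero _
    -- expected payment bound : ∫ S ≤ rr
    have hae : ∀ᵐ t ∂μtar, t ∈ Set.Ico rr 1 ∪ {1} := ae_mutar
    have haeIcc : ∀ᵐ t ∂μtar, t ∈ Set.Icc (0:ℝ) 1 := by
      filter_upwards [hae] with t ht
      rcases ht with ht | ht
      · exact ⟨le_trans rr_pos.le ht.1, ht.2.le⟩
      · rw [Set.mem_singleton_iff] at ht; subst ht; exact ⟨zero_le_one, le_rfl⟩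
    have hSint : Integrable S μtar := integrable_mutar hSm hSb
    have hqint : Integrable q μtar := integrable_mutar hqm hqb
    have hSq : ∫ t, S t ∂μtar ≤ ∫ t, q t ∂μtar := by
      apply MeasureTheory.integral_mono_ae hSint hqint
      filter_upwards [haeIcc] with t ht
      exact hSle t ht
    -- f ∘ ek  =ᵃᵉ  clid - S
    have hfae : (fun t => f (ek n k t)) =ᵐ[μtar] (fun t => clid t - S t) := by
      filter_upwards [haeIcc] with t ht
      rw [hf]
      simp only []
      rw [top1_ek ht.1, clid_eq ht.1 ht.2]
    have hint2 : Integrable (fun t => clid t - S t) μtar :=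
      (integrable_mutar measurable_clid clid_bd).sub hSint
    have : ∫ t, f (ek n k t) ∂ν = ∫ t, (clid t - S t) ∂μtar := by
      rw [hνeq]
      exact MeasureTheory.integral_congr_ae hfae
    rw [this, MeasureTheory.integral_sub (integrable_mutar measurable_clid clid_bd) hSint,
      integral_clid]
    have := le_trans hSq hrev
    linarith
  -- assemble the mixture
  have hintk : ∀ k : Fin n, Integrable f (Measure.map (ek n k) ν) := by
    intro k
    rw [MeasureTheory.integrable_map_measure hfm.aestronglyMeasurable
      (measurable_ek k).aemeasurable]
    rw [hνeq]
    apply Integrable.congr ((integrable_mutar measurable_clid clid_bd).sub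
      (integrable_mutar
        (Finset.measurable_sum _ fun i _ =>
          ((measurable_pi_apply i).comp hpm).comp (measurable_ek k))
        (C := n * C) (fun t => by
          calc |∑ i, p (ek n k t) i| ≤ ∑ i, |p (ek n k t) i| :=
                Finset.abs_sum_le_sum_abs _ _
            _ ≤ ∑ _i : Fin n, C := Finset.sum_le_sum fun i _ => hC _ i
            _ = n * C := by rw [Finset.sum_const, Finset.card_univ, Fintype.card_fin,
                nsmul_eq_mul])))
    · filter_upwards [ae_mutar] with t ht
      have htIcc : t ∈ Set.Icc (0:ℝ) 1 := by
        rcases ht with ht | ht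
        · exact ⟨le_trans rr_pos.le ht.1, ht.2.le⟩
        · rw [Set.mem_singleton_iff] at ht; subst ht; exact ⟨zero_le_one, le_rfl⟩
      show clid t - _ = f (ek n k t)
      rw [hf]
      simp only []
      rw [top1_ek htIcc.1, clid_eq htIcc.1 htIcc.2]
      simp [Function.comp]
  rw [mechRegret, ← hf, restrict_self_of_compl_null G hGcompl, hG,
    MeasureTheory.integral_smul_measure,
    MeasureTheory.integral_finset_sum_measure (fun k _ => hintk k)]
  have hmap : ∀ k : Fin n, ∫ v, f v ∂(Measure.map (ek n k) ν) = ∫ t, f (ek n k t) ∂ν :=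
    fun k => MeasureTheory.integral_map (measurable_ek k).aemeasurable
      hfm.aestronglyMeasurable
  have hsum : (n : ℝ) * rr ≤ ∑ k : Fin n, ∫ v, f v ∂(Measure.map (ek n k) ν) := by
    calc (n:ℝ) * rr = ∑ _k : Fin n, rr := by
          rw [Finset.sum_const, Finset.card_univ, Fintype.card_fin, nsmul_eq_mul]
      _ ≤ ∑ k : Fin n, ∫ v, f v ∂(Measure.map (ek n k) ν) := by
          apply Finset.sum_le_sum
          intro k _
          rw [hmap k]
          exact hmain k
  have htr : ((n : ℝ≥0∞)⁻¹).toReal = (n:ℝ)⁻¹ := by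
    rw [ENNReal.toReal_inv]
    norm_num
  rw [htr, smul_eq_mul]
  have hn0 : (0:ℝ) < n := by exact_mod_cast hn
  calc rr = (n:ℝ)⁻¹ * ((n:ℝ) * rr) := by field_simp
    _ ≤ (n:ℝ)⁻¹ * ∑ k : Fin n, ∫ v, f v ∂(Measure.map (ek n k) ν) := by
        apply mul_le_mul_of_nonneg_left hsum (by positivity)

end S16
namespace S16
variable {n : ℕ}

lemma top1_le_one (hn : 1 ≤ n) {v : Fin n → ℝ} (hv : v ∈ Set.Icc (0 : Fin n → ℝ) 1) :
    top1 v ≤ 1 := by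
  haveI : Nonempty (Fin n) := ⟨⟨0, by omega⟩⟩
  exact ciSup_le (fun i => by simpa using hv.2 i)

lemma mechRegret_le_general (hn : 1 ≤ n) {p : (Fin n → ℝ) → Fin n → ℝ} {B : ℝ} (hB0 : 0 ≤ B)
    (hB : ∀ v ∈ Set.Icc (0 : Fin n → ℝ) 1, top1 v - ∑ i, p v i ≤ B)
    (G : Measure (Fin n → ℝ)) (hGp : IsProbabilityMeasure G) :
    mechRegret n p G ≤ B := by
  haveI := hGp
  rw [mechRegret]
  by_cases hint : Integrable (fun v => top1 v - ∑ i, p v i) (G.restrict (Set.Icc 0 1))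
  · calc (∫ v in Set.Icc (0:Fin n → ℝ) 1, (top1 v - ∑ i, p v i) ∂G)
        ≤ ∫ _v in Set.Icc (0:Fin n → ℝ) 1, B ∂G := by
          apply MeasureTheory.integral_mono_ae hint (MeasureTheory.integrable_const B)
          exact (MeasureTheory.ae_restrict_iff' measSet_IccPi).mpr
            (MeasureTheory.ae_of_all _ hB)
      _ = (G (Set.Icc 0 1)).toReal • B := MeasureTheory.setIntegral_const B
      _ ≤ B := by
          rw [smul_eq_mul]
          apply mul_le_of_le_one_left hB0
          have h1 : G (Set.Icc 0 1) ≤ 1 := prob_le_one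
          calc (G (Set.Icc 0 1)).toReal ≤ (1 : ℝ≥0∞).toReal :=
                ENNReal.toReal_mono ENNReal.one_ne_top h1
            _ = 1 := ENNReal.toReal_one
  · rw [MeasureTheory.integral_undef hint]
    exact hB0

lemma generic_pointwise (hn : 1 ≤ n) {p : (Fin n → ℝ) → Fin n → ℝ} {C : ℝ}
    (hC : ∀ v i, |p v i| ≤ C) {v : Fin n → ℝ} (hv : v ∈ Set.Icc (0 : Fin n → ℝ) 1) :
    top1 v - ∑ i, p v i ≤ 1 + n * max C 0 := by
  have h1 : top1 v ≤ 1 := top1_le_one hn hv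
  have h2 : -(∑ i, p v i) ≤ n * max C 0 := by
    rw [← Finset.sum_neg_distrib]
    calc ∑ i, -(p v i) ≤ ∑ _i : Fin n, max C 0 := by
          apply Finset.sum_le_sum
          intro i _
          have := abs_le.mp (hC v i)
          linarith [le_max_left C 0, this.1]
      _ = n * max C 0 := by
          rw [Finset.sum_const, Finset.card_univ, Fintype.card_fin, nsmul_eq_mul]
  linarith

lemma Fstar_prob (hn : 1 ≤ n) (ν : Measure ℝ) [IsProbabilityMeasure ν] :
    IsProbabilityMeasure ((n : ℝ≥0∞)⁻¹ • ∑ k : Fin n, Measure.map (ek n k) ν) := by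
  constructor
  rw [Measure.smul_apply, Measure.finset_sum_apply]
  have heach : ∀ k : Fin n, (Measure.map (ek n k) ν) Set.univ = 1 := by
    intro k
    haveI := MeasureTheory.Measure.isProbabilityMeasure_map
      ((measurable_ek (n := n) k).aemeasurable (μ := ν))
    exact measure_univ
  rw [Finset.sum_congr rfl (fun k _ => heach k), Finset.sum_const, Finset.card_univ,
    Fintype.card_fin, nsmul_eq_mul, mul_one, smul_eq_mul]
  exact ENNReal.inv_mul_cancel (by exact_mod_cast (by omega : n ≠ 0) : (n:ℝ≥0∞) ≠ 0)
    (ENNReal.natCast_ne_top n)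

lemma Fstar_Icc (hn : 1 ≤ n) (ν : Measure ℝ) [IsProbabilityMeasure ν]
    (hν : ∀ v : ℝ, ν (Set.Iic v) = ENNReal.ofReal (isoCDF rr v)) :
    ((n : ℝ≥0∞)⁻¹ • ∑ k : Fin n, Measure.map (ek n k) ν)
      (Set.Icc (0 : Fin n → ℝ) 1) = 1 := by
  have hνeq : ν = μtar := Measure.ext_of_Iic ν μtar (fun a => by rw [hν a, μtar_Iic])
  have hνIcc : ν (Set.Icc (0:ℝ) 1) = 1 := by
    have hc := ν_compl_null ν hνeq
    have := measure_add_measure_compl (μ := ν) (measurableSet_Icc (a := (0:ℝ)) (b := 1))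
    rw [hc, add_zero, measure_univ] at this
    exact this
  rw [Measure.smul_apply, Measure.finset_sum_apply]
  have heach : ∀ k : Fin n, (Measure.map (ek n k) ν) (Set.Icc (0 : Fin n → ℝ) 1) = 1 := by
    intro k
    rw [Measure.map_apply (measurable_ek k) measSet_IccPi]
    have hpre : (ek n k) ⁻¹' (Set.Icc (0:Fin n → ℝ) 1) = Set.Icc (0:ℝ) 1 := by
      ext t
      simp only [Set.mem_preimage, Set.mem_Icc]
      constructor
      · intro h
        have h0 := h.1 k
        have h1 := h.2 k
        rw [ek_apply_self] at h0 h1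
        exact ⟨by simpa using h0, by simpa using h1⟩
      · intro h
        exact ek_mem_Icc h.1 h.2
    rw [hpre]
    exact hνIcc
  rw [Finset.sum_congr rfl (fun k _ => heach k), Finset.sum_const, Finset.card_univ,
    Fintype.card_fin, nsmul_eq_mul, mul_one, smul_eq_mul]
  exact ENNReal.inv_mul_cancel (by exact_mod_cast (by omega : n ≠ 0) : (n:ℝ≥0∞) ≠ 0)
    (ENNReal.natCast_ne_top n)

lemma Fstar_exch (hn : 1 ≤ n) (ν : Measure ℝ) [IsProbabilityMeasure ν] :
    Exchangeable n ((n : ℝ≥0∞)⁻¹ • ∑ k : Fin n, Measure.map (ek n k) ν) := by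
  intro σ
  have hT : Measurable (fun v : Fin n → ℝ => fun i => v (σ i)) :=
    measurable_pi_lambda _ fun i => measurable_pi_apply _
  apply Measure.ext
  intro s hs
  rw [Measure.map_apply hT hs, Measure.smul_apply, Measure.smul_apply,
    Measure.finset_sum_apply, Measure.finset_sum_apply]
  congr 1
  have hcomp : ∀ k : Fin n,
      (Measure.map (ek n k) ν) ((fun v : Fin n → ℝ => fun i => v (σ i)) ⁻¹' s)
        = ν ((ek n (σ.symm k)) ⁻¹' s) := by
    intro k
    rw [Measure.map_apply (measurable_ek k) (hT hs)]
    congr 1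
    ext t
    simp only [Set.mem_preimage]
    have : (fun i => ek n k t (σ i)) = ek n (σ.symm k) t := by
      funext i
      simp only [ek]
      by_cases h : σ i = k
      · rw [if_pos h, if_pos (by rw [← h]; exact (Equiv.symm_apply_apply σ i).symm)]
      · rw [if_neg h, if_neg (fun hc => h (by rw [hc]; exact Equiv.apply_symm_apply σ k))]
    rw [this]
  rw [Finset.sum_congr rfl (fun k _ => hcomp k)]
  have hre : ∀ k : Fin n, ν ((ek n k) ⁻¹' s) = (Measure.map (ek n k) ν) s := by
    intro k
    rw [Measure.map_apply (measurable_ek k) hs]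
  calc ∑ k : Fin n, ν ((ek n (σ.symm k)) ⁻¹' s)
      = ∑ k : Fin n, ν ((ek n k) ⁻¹' s) := Equiv.sum_comp σ.symm (fun k => ν (ek n k ⁻¹' s))
    _ = ∑ k : Fin n, (Measure.map (ek n k) ν) s :=
        Finset.sum_congr rfl (fun k _ => hre k)

end S16

/-- let `F*` be the uniform mixture over `k` of the distributions under
which all coordinates other than `k` are `0` and coordinate `k` is isorevenue with
parameter `1/e`. Then every DSIC mechanism has regret at least `1/e` against `F*`;
hence (since `F*` is exchangeable) the minimax regret over all distributions on
`[0,1]^n`, and over all exchangeable distributions, equals `1/e`. -/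
theorem stmt16 (n : ℕ) (hn : 1 ≤ n)
    (ν : Measure ℝ) [IsProbabilityMeasure ν]
    (hν : ∀ v : ℝ, ν (Set.Iic v) = ENNReal.ofReal (isoCDF (Real.exp (-1)) v)) :
    (∀ x p : (Fin n → ℝ) → Fin n → ℝ, DSIC n x p →
      Real.exp (-1) ≤ mechRegret n p
        ((n : ℝ≥0∞)⁻¹ •
          ∑ k : Fin n, Measure.map (fun t : ℝ => fun i : Fin n => if i = k then t else 0) ν)) ∧
    minimaxRegret n (allClass n) = Real.exp (-1) ∧
    minimaxRegret n (exchClass n) = Real.exp (-1) := by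
  have hν' : ∀ v : ℝ, ν (Set.Iic v) = ENNReal.ofReal (isoCDF S16.rr v) := hν
  have hpart1 : ∀ x p : (Fin n → ℝ) → Fin n → ℝ, DSIC n x p →
      S16.rr ≤ mechRegret n p
        ((n : ℝ≥0∞)⁻¹ • ∑ k : Fin n, Measure.map (S16.ek n k) ν) :=
    fun x p hD => S16.part1 hn ν hν' hD
  set Fs : Measure (Fin n → ℝ) :=
    (n : ℝ≥0∞)⁻¹ • ∑ k : Fin n, Measure.map (S16.ek n k) ν with hFs
  have hFsP : IsProbabilityMeasure Fs := S16.Fstar_prob hn ν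
  have hFsIcc : Fs (Set.Icc (0 : Fin n → ℝ) 1) = 1 := S16.Fstar_Icc hn ν hν'
  have hFsExch : Exchangeable n Fs := S16.Fstar_exch hn ν
  have hFsAll : Fs ∈ allClass n := ⟨hFsP, hFsIcc⟩
  have hFsExc : Fs ∈ exchClass n := ⟨hFsP, hFsIcc, hFsExch⟩
  have hsubAll : exchClass n ⊆ allClass n := fun G hG => ⟨hG.1, hG.2.1⟩
  have key : ∀ C : Set (Measure (Fin n → ℝ)), C ⊆ allClass n → Fs ∈ C →
      minimaxRegret n C = Real.exp (-1) := by
    intro C hCsub hCmem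
    have hlow : ∀ w ∈ {w | ∃ x p, DSIC n x p ∧ w = worstCase n p C}, S16.rr ≤ w := by
      rintro w ⟨x, p, hD, rfl⟩
      obtain ⟨C₀, hC₀⟩ := hD.2.2.1
      have hbdd : BddAbove {w | ∃ G ∈ C, w = mechRegret n p G} := by
        refine ⟨1 + n * max C₀ 0, ?_⟩
        rintro w ⟨G, hG, rfl⟩
        have hB0 : (0:ℝ) ≤ 1 + n * max C₀ 0 := by positivity
        exact S16.mechRegret_le_general hn hB0
          (fun v hv => S16.generic_pointwise hn hC₀ hv) G (hCsub hG).1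
      have hmem : mechRegret n p Fs ∈ {w | ∃ G ∈ C, w = mechRegret n p G} :=
        ⟨Fs, hCmem, rfl⟩
      exact le_trans (hpart1 x p hD) (le_csSup hbdd hmem)
    have hup : worstCase n (S16.myp n) C ≤ S16.rr := by
      apply Real.sSup_le
      · rintro w ⟨G, hG, rfl⟩
        exact S16.mechRegret_le_general hn S16.rr_pos.le
          (fun v hv => S16.myp_regret hn hv) G (hCsub hG).1
      · exact S16.rr_pos.le
    have hmemS : worstCase n (S16.myp n) C ∈
        {w | ∃ x p, DSIC n x p ∧ w = worstCase n p C} :=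
      ⟨S16.myx n, S16.myp n, S16.myDSIC n, rfl⟩
    rw [minimaxRegret]
    apply le_antisymm
    · exact le_trans (csInf_le ⟨S16.rr, hlow⟩ hmemS) hup
    · exact le_csInf ⟨_, hmemS⟩ hlow
  exact ⟨hpart1, key (allClass n) (fun _ h => h) hFsAll, key (exchClass n) hsubAll hFsExc⟩

end
end

section
/- For an integer n ≥ 1 and r ∈ [0,1], define the worst-case regret of the second-price auction with deterministic reserve r as W_n(r) := sup over all Borel probability measures F on [0,1] of ∫_{[0,1]^n} ( v^{(1)} − max(v^{(2)}, r)·1{v^{(1)} ≥ r} ) dF^{⊗n}(v). Then: for n = 1, W_1(r) = max(1−r, r); and for n ≥ 2, W_n(r) = (1−r)^n (n−1)^{n−1} / ((1−r)n − r)^{n−1} if r ≤ 1/2, and W_n(r) = r if r ≥ 1/2. -/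
open MeasureTheory Real Set ENNReal

noncomputable section

namespace S17

variable {n : ℕ}

lemma bdd (v : Fin n → ℝ) : BddAbove (Set.range v) := (Set.finite_range v).bddAbove

lemma le_top1 (v : Fin n → ℝ) (i : Fin n) : v i ≤ top1 v := le_ciSup (bdd v) i

lemma top1_le (v : Fin n → ℝ) {c : ℝ} (hn : 0 < n) (h : ∀ i, v i ≤ c) : top1 v ≤ c := by
  have : Nonempty (Fin n) := ⟨⟨0, hn⟩⟩
  exact ciSup_le h

lemma top1_nonneg (hn : 0 < n) {v : Fin n → ℝ} (hv : v ∈ Icc (0 : Fin n → ℝ) 1) : 0 ≤ top1 v :=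
  le_trans (hv.1 ⟨0, hn⟩) (le_top1 v ⟨0, hn⟩)

lemma top1_le_one (hn : 0 < n) {v : Fin n → ℝ} (hv : v ∈ Icc (0 : Fin n → ℝ) 1) : top1 v ≤ 1 :=
  top1_le v hn fun i => hv.2 i

lemma lt_top1_iff (hn : 0 < n) (v : Fin n → ℝ) (t : ℝ) : t < top1 v ↔ ∃ i, t < v i := by
  have : Nonempty (Fin n) := ⟨⟨0, hn⟩⟩
  exact lt_ciSup_iff (bdd v)

lemma top1_lt_iff (hn : 0 < n) (v : Fin n → ℝ) (t : ℝ) : top1 v < t ↔ ∀ i, v i < t := by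
  have : Nonempty (Fin n) := ⟨⟨0, hn⟩⟩
  constructor
  · exact fun h i => lt_of_le_of_lt (le_top1 v i) h
  · intro h
    obtain ⟨i₀, hi₀⟩ := Finite.exists_max v
    exact lt_of_le_of_lt (ciSup_le hi₀) (h i₀)

/-- inner biSup -/
def B (v : Fin n → ℝ) (i : Fin n) : ℝ := ⨆ j ∈ ({i}ᶜ : Set (Fin n)), v j

lemma top2_eq (v : Fin n → ℝ) : top2 v = ⨅ i, B v i := rfl

lemma bddB (v : Fin n → ℝ) (i : Fin n) :
    BddAbove (Set.range fun j => ⨆ _ : j ∈ ({i}ᶜ : Set (Fin n)), v j) :=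
  (Set.finite_range _).bddAbove

lemma B_le (v : Fin n → ℝ) (i : Fin n) {c : ℝ} (hc : 0 ≤ c) (h : ∀ j, j ≠ i → v j ≤ c) :
    B v i ≤ c := by
  refine Real.iSup_le (fun j => Real.iSup_le (fun hj => h j ?_) hc) hc
  simpa using hj

lemma le_B (v : Fin n → ℝ) {i j : Fin n} (hj : j ≠ i) : v j ≤ B v i := by
  have h1 : (⨆ _ : j ∈ ({i}ᶜ : Set (Fin n)), v j) = v j := ciSup_pos (by simpa using hj)
  calc v j = _ := h1.symm
    _ ≤ B v i := le_ciSup (bddB v i) j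

lemma bddBelowB (v : Fin n → ℝ) : BddBelow (Set.range (B v)) := (Set.finite_range _).bddBelow

lemma top2_le_of (hn : 0 < n) (v : Fin n → ℝ) {t : ℝ} (ht : 0 ≤ t) (i : Fin n)
    (h : ∀ j, j ≠ i → v j ≤ t) : top2 v ≤ t :=
  le_trans (ciInf_le (bddBelowB v) i) (B_le v i ht h)

lemma exists_of_top2_le (hn : 0 < n) (v : Fin n → ℝ) {t : ℝ} (h : top2 v ≤ t) :
    ∃ i, ∀ j, j ≠ i → v j ≤ t := by
  have : Nonempty (Fin n) := ⟨⟨0, hn⟩⟩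
  obtain ⟨i₀, hi₀⟩ := Finite.exists_min (B v)
  have h2 : top2 v = B v i₀ := le_antisymm (ciInf_le (bddBelowB v) i₀) (le_ciInf hi₀)
  exact ⟨i₀, fun j hj => le_trans (le_B v hj) (h2 ▸ h)⟩

lemma top2_le_top1 (hn : 0 < n) {v : Fin n → ℝ} (hv : v ∈ Icc (0 : Fin n → ℝ) 1) :
    top2 v ≤ top1 v :=
  top2_le_of hn v (top1_nonneg hn hv) ⟨0, hn⟩ (fun j _ => le_top1 v j)

lemma le_top2 (hn : 0 < n) (v : Fin n → ℝ) {c : ℝ} (h : ∀ i, ∃ j, j ≠ i ∧ c ≤ v j) :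
    c ≤ top2 v := by
  have : Nonempty (Fin n) := ⟨⟨0, hn⟩⟩
  refine le_ciInf fun i => ?_
  obtain ⟨j, hj, hc⟩ := h i
  exact le_trans hc (le_B v hj)

lemma mtop1 : Measurable (top1 : (Fin n → ℝ) → ℝ) :=
  Measurable.iSup fun i => measurable_pi_apply i

lemma mtop2 : Measurable (top2 : (Fin n → ℝ) → ℝ) :=
  Measurable.iInf fun i => Measurable.iSup fun j => Measurable.iSup_Prop _ (measurable_pi_apply j)



/-- AM-GM: `x^m * y ≤ ((m*x+y)/(m+1))^(m+1)` for `x y ≥ 0`. -/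
lemma amgm (m : ℕ) {x y : ℝ} (hx : 0 ≤ x) (hy : 0 ≤ y) :
    x ^ m * y ≤ (((m : ℝ) * x + y) / (m + 1)) ^ (m + 1) := by
  have hm1 : (0:ℝ) < (m:ℝ) + 1 := by positivity
  have hw1 : (0:ℝ) ≤ (m:ℝ) / (m+1) := by positivity
  have hw2 : (0:ℝ) ≤ 1 / ((m:ℝ)+1) := by positivity
  have hsum : (m:ℝ) / (m+1) + 1 / ((m:ℝ)+1) = 1 := by field_simp
  have key := Real.geom_mean_le_arith_mean2_weighted hw1 hw2 hx hy hsum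
  have e1 : ((m:ℝ)/(m+1)) * ((m:ℝ)+1) = (m:ℝ) := by field_simp
  have e2 : (1/((m:ℝ)+1)) * ((m:ℝ)+1) = 1 := by field_simp
  have hL : (x ^ ((m:ℝ)/(m+1)) * y ^ (1/((m:ℝ)+1))) ^ ((m:ℝ)+1) = x ^ m * y := by
    rw [Real.mul_rpow (Real.rpow_nonneg hx _) (Real.rpow_nonneg hy _),
      ← Real.rpow_mul hx, ← Real.rpow_mul hy, e1, e2, Real.rpow_natCast, Real.rpow_one]
  have hcast : ((m:ℝ)+1) = ((m+1 : ℕ) : ℝ) := by push_cast; ring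
  calc x ^ m * y = (x ^ ((m:ℝ)/(m+1)) * y ^ (1/((m:ℝ)+1))) ^ ((m:ℝ)+1) := hL.symm
    _ ≤ (((m:ℝ) * x + y) / (m + 1)) ^ ((m:ℝ)+1) := by
        have hR : ((m:ℝ)/(m+1) * x + 1/((m:ℝ)+1) * y) = ((m:ℝ) * x + y) / (m + 1) := by ring
        rw [← hR]
        exact Real.rpow_le_rpow (by positivity) key (le_of_lt hm1)
    _ = (((m:ℝ) * x + y) / (m + 1)) ^ (m+1) := by
        rw [hcast, Real.rpow_natCast]

/-- `g(t) = r t^n + (1-r) n t^(n-1) (1-t) ≤ R*` for `t ∈ [0,1]`, when `r ≤ 1/2`, `n ≥ 2`. -/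
lemma lemG (n : ℕ) (hn : 2 ≤ n) (r t : ℝ) (hr0 : 0 ≤ r) (hr1 : r ≤ 1/2)
    (ht0 : 0 ≤ t) (_ht1 : t ≤ 1) :
    r * t ^ n + (1 - r) * n * t ^ (n-1) * (1 - t)
      ≤ (1 - r) ^ n * ((n : ℝ) - 1) ^ (n - 1) / ((1 - r) * n - r) ^ (n - 1) := by
  have hnn : ((n:ℝ)) ≥ 2 := by exact_mod_cast hn
  have hD : (0:ℝ) < (1 - r) * n - r := by nlinarith
  have hne : (n:ℝ) - 1 ≠ 0 := by intro h; nlinarith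
  have hn1 : (0:ℝ) ≤ (n:ℝ) - 1 := by linarith
  have hm : ((n - 1 : ℕ) : ℝ) = (n:ℝ) - 1 := by
    push_cast [Nat.cast_sub (by omega : (1:ℕ) ≤ n)]; ring
  set D := (1 - r) * n - r with hDdef
  have hLHSeq : r * t ^ n + (1 - r) * n * t ^ (n-1) * (1 - t)
      = t ^ (n-1) * ((n:ℝ) * (1-r) - D * t) := by
    have hpow : t ^ n = t ^ (n-1) * t := by
      conv_lhs => rw [show n = (n-1) + 1 by omega]
      rw [pow_succ]
    rw [hpow, hDdef]; ring
  rw [hLHSeq]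
  have hRpos : 0 ≤ (1 - r) ^ n * ((n : ℝ) - 1) ^ (n - 1) / D ^ (n - 1) :=
    div_nonneg (mul_nonneg (pow_nonneg (by linarith) _) (pow_nonneg hn1 _)) (pow_nonneg hD.le _)
  by_cases hcase : (n:ℝ) * (1-r) - D * t ≤ 0
  · exact le_trans (mul_nonpos_of_nonneg_of_nonpos (pow_nonneg ht0 _) hcase) hRpos
  push_neg at hcase
  have hx : (0:ℝ) ≤ D * t / ((n:ℝ) - 1) := div_nonneg (mul_nonneg hD.le ht0) hn1
  have key := amgm (n-1) hx hcase.le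
  rw [hm] at key
  have hc1 : ((n:ℝ) - 1) * (D * t / ((n:ℝ) - 1)) = D * t := by field_simp
  rw [hc1] at key
  have hc2 : D * t + ((n:ℝ) * (1-r) - D * t) = (n:ℝ) * (1 - r) := by ring
  rw [hc2] at key
  have hnm : ((n:ℝ) - 1) + 1 = (n:ℝ) := by ring
  have hexp : (n - 1) + 1 = n := by omega
  rw [hnm, hexp] at key
  have hnne : (n:ℝ) ≠ 0 := by positivity
  have hc3 : (n:ℝ) * (1 - r) / (n:ℝ) = 1 - r := by
    rw [mul_comm, mul_div_assoc, div_self hnne, mul_one]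
  rw [hc3] at key
  -- key : (D * t / (n-1)) ^ (n-1) * (n(1-r) - D t) ≤ (1-r)^n
  have key2 : D ^ (n-1) * t ^ (n-1) * ((n:ℝ) * (1-r) - D * t)
      ≤ (1-r) ^ n * ((n:ℝ) - 1) ^ (n-1) := by
    have h := mul_le_mul_of_nonneg_right key (pow_nonneg hn1 (n-1))
    calc D ^ (n-1) * t ^ (n-1) * ((n:ℝ) * (1-r) - D * t)
        = (D * t / ((n:ℝ)-1)) ^ (n-1) * ((n:ℝ) * (1-r) - D * t) * ((n:ℝ)-1) ^ (n-1) := by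
          rw [div_pow, mul_pow]; field_simp
      _ ≤ _ := h
  rw [le_div_iff₀ (pow_pos hD _)]
  calc t ^ (n-1) * ((n:ℝ) * (1-r) - D * t) * D ^ (n-1)
      = D ^ (n-1) * t ^ (n-1) * ((n:ℝ) * (1-r) - D * t) := by ring
    _ ≤ _ := key2

/-- global max of `φ(s) = n s^(n-1)(1-s)` at `(n-1)/n`. -/
lemma lemPhiMax (n : ℕ) (hn : 2 ≤ n) {s : ℝ} (hs0 : 0 ≤ s) (hs1 : s ≤ 1) :
    (n:ℝ) * s ^ (n-1) * (1 - s)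
      ≤ (n:ℝ) * (((n:ℝ)-1)/(n:ℝ)) ^ (n-1) * (1 - ((n:ℝ)-1)/(n:ℝ)) := by
  have hnn : ((n:ℝ)) ≥ 2 := by exact_mod_cast hn
  have hnne : (n:ℝ) ≠ 0 := by positivity
  have hn1 : (0:ℝ) < (n:ℝ) - 1 := by linarith
  have hm : ((n - 1 : ℕ) : ℝ) = (n:ℝ) - 1 := by
    push_cast [Nat.cast_sub (by omega : (1:ℕ) ≤ n)]; ring
  have key := amgm (n-1) hs0 (mul_nonneg hn1.le (by linarith) : (0:ℝ) ≤ ((n:ℝ)-1) * (1 - s))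
  rw [hm] at key
  have hc : (((n:ℝ)-1) * s + ((n:ℝ)-1) * (1-s)) / (((n:ℝ)-1) + 1) = ((n:ℝ)-1)/(n:ℝ) := by
    have : ((n:ℝ)-1) * s + ((n:ℝ)-1) * (1-s) = (n:ℝ) - 1 := by ring
    rw [this]; congr 1; ring
  rw [hc, show (n-1)+1 = n by omega] at key
  -- key : s^(n-1) * ((n-1)(1-s)) ≤ ((n-1)/n)^n
  have hrhs : (n:ℝ) * (((n:ℝ)-1)/(n:ℝ)) ^ (n-1) * (1 - ((n:ℝ)-1)/(n:ℝ))
      = (n:ℝ) / ((n:ℝ)-1) * (((n:ℝ)-1)/(n:ℝ)) ^ n := by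
    have hpow : (((n:ℝ)-1)/(n:ℝ)) ^ n = (((n:ℝ)-1)/(n:ℝ)) ^ (n-1) * (((n:ℝ)-1)/(n:ℝ)) := by
      rw [← pow_succ, Nat.sub_add_cancel (by omega : 1 ≤ n)]
    rw [hpow]
    have h1 : 1 - ((n:ℝ)-1)/(n:ℝ) = 1/(n:ℝ) := by field_simp; ring
    rw [h1]; field_simp
  rw [hrhs]
  have := mul_le_mul_of_nonneg_left key (le_of_lt (div_pos (by linarith : (0:ℝ) < (n:ℝ)) hn1))
  calc (n:ℝ) * s ^ (n-1) * (1 - s)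
      = (n:ℝ)/((n:ℝ)-1) * (s ^ (n-1) * (((n:ℝ)-1) * (1-s))) := by field_simp
    _ ≤ (n:ℝ)/((n:ℝ)-1) * (((n:ℝ)-1)/(n:ℝ)) ^ n := this

/-- `φ` is antitone on `[(n-1)/n, 1]`. -/
lemma lemPhiAnti (n : ℕ) (hn : 2 ≤ n) {x y : ℝ} (hx : ((n:ℝ)-1)/(n:ℝ) ≤ x) (hxy : x ≤ y)
    (hy : y ≤ 1) : (n:ℝ) * y ^ (n-1) * (1 - y) ≤ (n:ℝ) * x ^ (n-1) * (1 - x) := by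
  have hnn : ((n:ℝ)) ≥ 2 := by exact_mod_cast hn
  have hanti : AntitoneOn (fun z : ℝ => z ^ (n-1) * (1 - z)) (Set.Icc (((n:ℝ)-1)/(n:ℝ)) 1) := by
    apply antitoneOn_of_deriv_nonpos (convex_Icc _ _)
    · exact (continuous_id.pow _ |>.mul (continuous_const.sub continuous_id)).continuousOn
    · intro z hz
      exact ((differentiable_id.pow _).mul (differentiable_const _ |>.sub differentiable_id)).differentiableAt.differentiableWithinAt
    · intro z hz
      rw [interior_Icc] at hz
      have hz0 : (0:ℝ) < z := by
        have : (0:ℝ) < ((n:ℝ)-1)/(n:ℝ) := by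
          apply div_pos (by linarith) (by linarith)
        linarith [hz.1]
      have hd : HasDerivAt (fun z : ℝ => z ^ (n-1) * (1 - z))
          ((((n-1 : ℕ)):ℝ) * z ^ (n-1-1) * (1 - z) + z ^ (n-1) * (-1)) z := by
        exact (hasDerivAt_pow (n-1) z).mul ((hasDerivAt_id z).const_sub 1)
      rw [hd.deriv]
      have hcast : (((n-1 : ℕ)):ℝ) = (n:ℝ) - 1 := by
        push_cast [Nat.cast_sub (by omega : (1:ℕ) ≤ n)]; ring
      have e : z ^ (n-1) = z ^ (n-1-1) * z := by
        rw [← pow_succ]; congr 1; omega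
      have hz1 : ((n:ℝ)-1) < z * (n:ℝ) := (div_lt_iff₀ (by linarith : (0:ℝ) < (n:ℝ))).1 hz.1
      rw [hcast, e]
      have hre : ((n:ℝ)-1) * z ^ (n-1-1) * (1 - z) + z ^ (n-1-1) * z * (-1)
          = z ^ (n-1-1) * (((n:ℝ)-1) * (1-z) - z) := by ring
      rw [hre]
      apply mul_nonpos_of_nonneg_of_nonpos (pow_nonneg hz0.le _)
      nlinarith [hz1, hz.2]
  have h := hanti ⟨hx, le_trans hxy hy⟩ ⟨le_trans hx hxy, hy⟩ hxy
  simp only at h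
  calc (n:ℝ) * y ^ (n-1) * (1 - y) = (n:ℝ) * (y ^ (n-1) * (1 - y)) := by ring
    _ ≤ (n:ℝ) * (x ^ (n-1) * (1 - x)) := by
        apply mul_le_mul_of_nonneg_left h (by positivity)
    _ = _ := by ring

lemma lemPhiBound (n : ℕ) (hn : 2 ≤ n) {a s : ℝ} (ha0 : 0 ≤ a) (has : a ≤ s) (hs1 : s ≤ 1) :
    (n:ℝ) * s ^ (n-1) * (1 - s)
      ≤ (n:ℝ) * (max a (((n:ℝ)-1)/(n:ℝ))) ^ (n-1) * (1 - max a (((n:ℝ)-1)/(n:ℝ))) := by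
  by_cases h : s ≤ ((n:ℝ)-1)/(n:ℝ)
  · rw [max_eq_right (le_trans has h)]
    exact lemPhiMax n hn (le_trans ha0 has) hs1
  · push_neg at h
    exact lemPhiAnti n hn (le_max_right _ _) (max_le has h.le) hs1

lemma lemFin (n : ℕ) (hn : 2 ≤ n) (r a : ℝ) (hr0 : 0 ≤ r) (hr1 : r ≤ 1/2)
    (ha0 : 0 ≤ a) (ha1 : a ≤ 1) :
    r * a ^ n
      + (1 - r) * ((n:ℝ) * (max a (((n:ℝ)-1)/(n:ℝ))) ^ (n-1) * (1 - max a (((n:ℝ)-1)/(n:ℝ))))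
      ≤ (1 - r) ^ n * ((n : ℝ) - 1) ^ (n - 1) / ((1 - r) * n - r) ^ (n - 1) := by
  set c := max a (((n:ℝ)-1)/(n:ℝ)) with hc
  have hnn : ((n:ℝ)) ≥ 2 := by exact_mod_cast hn
  have hc0 : 0 ≤ c := le_trans ha0 (le_max_left _ _)
  have hc1 : c ≤ 1 := by
    apply max_le ha1
    rw [div_le_one (by linarith : (0:ℝ) < (n:ℝ))]; linarith
  have hac : a ≤ c := le_max_left _ _
  have h1 : r * a ^ n ≤ r * c ^ n :=
    mul_le_mul_of_nonneg_left (pow_le_pow_left₀ ha0 hac n) hr0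
  have h2 := lemG n hn r c hr0 hr1 hc0 hc1
  calc r * a ^ n + (1 - r) * ((n:ℝ) * c ^ (n-1) * (1 - c))
      ≤ r * c ^ n + (1 - r) * ((n:ℝ) * c ^ (n-1) * (1 - c)) := by linarith
    _ = r * c ^ n + (1 - r) * (n:ℝ) * c ^ (n-1) * (1 - c) := by ring
    _ ≤ _ := h2


section Meas

variable {n : ℕ} (r : ℝ)

/-- the integrand -/
def fr {n : ℕ} (r : ℝ) (v : Fin n → ℝ) : ℝ :=
  top1 v - if r ≤ top1 v then max (top2 v) r else 0

lemma mfr : Measurable (fr r : (Fin n → ℝ) → ℝ) := by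
  apply Measurable.sub mtop1
  exact Measurable.ite (measurableSet_le measurable_const mtop1)
    (mtop2.max measurable_const) measurable_const

lemma fr_nonneg (hn : 0 < n) (hr0 : 0 ≤ r) {v : Fin n → ℝ} (hv : v ∈ Set.Icc 0 1) :
    0 ≤ fr r v := by
  unfold fr
  by_cases h : r ≤ top1 v
  · rw [if_pos h]
    have : max (top2 v) r ≤ top1 v := max_le (top2_le_top1 hn hv) h
    linarith
  · rw [if_neg h]
    linarith [top1_nonneg hn hv]

lemma fr_le (hn : 0 < n) (hr1 : r ≤ 1) {v : Fin n → ℝ} (hv : v ∈ Set.Icc 0 1) :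
    fr r v ≤ max (1 - r) r := by
  unfold fr
  by_cases h : r ≤ top1 v
  · rw [if_pos h]
    have h1 : top1 v ≤ 1 := top1_le_one hn hv
    have h2 : r ≤ max (top2 v) r := le_max_right _ _
    calc top1 v - max (top2 v) r ≤ 1 - r := by linarith
      _ ≤ max (1 - r) r := le_max_left _ _
  · rw [if_neg h]
    push_neg at h
    calc top1 v - 0 = top1 v := by ring
      _ ≤ r := h.le
      _ ≤ max (1 - r) r := le_max_right _ _

lemma cube_eq (n : ℕ) :
    Set.Icc (0 : Fin n → ℝ) 1 = Set.pi Set.univ (fun _ => Set.Icc (0:ℝ) 1) := by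
  rw [← Set.pi_univ_Icc]; rfl

lemma cube_full (n : ℕ) (F : Measure ℝ) [IsProbabilityMeasure F]
    (hF : F (Set.Icc 0 1) = 1) :
    (Measure.pi fun _ : Fin n => F) (Set.Icc (0 : Fin n → ℝ) 1) = 1 := by
  rw [cube_eq, Measure.pi_pi]
  simp [hF]

lemma lemC (n : ℕ) (hn : 0 < n) (hr0 : 0 ≤ r) (hr1 : r ≤ 1) (F : Measure ℝ)
    [IsProbabilityMeasure F] (hF : F (Set.Icc 0 1) = 1) :
    ∫ v in Set.Icc (0 : Fin n → ℝ) 1, (top1 v - if r ≤ top1 v then max (top2 v) r else 0)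
      ∂(Measure.pi fun _ : Fin n => F) ≤ max (1 - r) r := by
  set pp := Measure.pi fun _ : Fin n => F with hpp
  have h1 : (∀ᵐ v ∂(pp.restrict (Set.Icc 0 1)), v ∈ Set.Icc (0 : Fin n → ℝ) 1) :=
    ae_restrict_mem measurableSet_Icc
  have hle : ∫ v in Set.Icc (0 : Fin n → ℝ) 1, fr r v ∂pp
      ≤ ∫ _ in Set.Icc (0 : Fin n → ℝ) 1, max (1 - r) r ∂pp := by
    apply integral_mono_of_nonneg
    · exact h1.mono fun v hv => fr_nonneg r hn hr0 hv
    · exact integrable_const _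
    · exact h1.mono fun v hv => fr_le r hn hr1 hv
  have hconst : ∫ _ in Set.Icc (0 : Fin n → ℝ) 1, max (1 - r) r ∂pp = max (1 - r) r := by
    rw [integral_const, measureReal_def, Measure.restrict_apply_univ, cube_full n F hF]
    simp
  calc ∫ v in Set.Icc (0 : Fin n → ℝ) 1, (top1 v - if r ≤ top1 v then max (top2 v) r else 0) ∂pp
      = ∫ v in Set.Icc (0 : Fin n → ℝ) 1, fr r v ∂pp := rfl
    _ ≤ _ := hle
    _ = _ := hconst

def E0 (n : ℕ) (a : ℝ) : Set (Fin n → ℝ) := Set.pi Set.univ (fun _ => ({a} : Set ℝ))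

def Ei (n : ℕ) (a : ℝ) (i : Fin n) : Set (Fin n → ℝ) :=
  Set.pi Set.univ (fun j => if j = i then ({1} : Set ℝ) else {a})

def E1 (n : ℕ) (a : ℝ) : Set (Fin n → ℝ) := ⋃ i, Ei n a i

lemma mem_E0 {a : ℝ} {v : Fin n → ℝ} : v ∈ E0 n a ↔ ∀ i, v i = a := by
  simp [E0, Set.mem_pi]

lemma mem_Ei {a : ℝ} {i : Fin n} {v : Fin n → ℝ} :
    v ∈ Ei n a i ↔ ∀ j, (j = i → v j = 1) ∧ (j ≠ i → v j = a) := by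
  simp only [Ei, Set.mem_pi, Set.mem_univ, forall_true_left]
  constructor
  · intro h j
    constructor
    · intro hj; have := h j; rw [if_pos hj] at this; simpa using this
    · intro hj; have := h j; rw [if_neg hj] at this; simpa using this
  · intro h j
    by_cases hj : j = i
    · rw [if_pos hj]; simpa using (h j).1 hj
    · rw [if_neg hj]; simpa using (h j).2 hj

lemma fr_cases (hn : 0 < n) {r a : ℝ} (hr0 : 0 ≤ r) (hr1 : r ≤ 1) (har : a ≤ r) (ha1 : a < 1)
    {v : Fin n → ℝ} (hv : v ∈ Set.Icc 0 1) (hvP : ∀ i, v i = a ∨ v i = 1) :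
    fr r v = Set.indicator (E0 n a) (fun _ => if r ≤ a then a - r else a) v
      + Set.indicator (E1 n a) (fun _ => 1 - r) v := by
  haveI : Nonempty (Fin n) := ⟨⟨0, hn⟩⟩
  by_cases h0 : ∀ i, v i = a
  · have hvE0 : v ∈ E0 n a := mem_E0.2 h0
    have hvE1 : v ∉ E1 n a := by
      simp only [E1, Set.mem_iUnion]
      rintro ⟨i, hi⟩
      have := ((mem_Ei.1 hi) i).1 rfl
      rw [h0 i] at this
      exact ha1.ne this
    have htop1 : top1 v = a := by
      have hva : v = fun _ => a := funext h0
      rw [show top1 v = ⨆ i, v i from rfl, hva]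
      exact ciSup_const
    have htop2le : top2 v ≤ r := le_trans (top2_le_top1 hn hv) (by rw [htop1]; exact har)
    rw [Set.indicator_of_mem hvE0, Set.indicator_of_notMem hvE1, add_zero]
    unfold fr
    rw [htop1]
    by_cases hra : r ≤ a
    · rw [if_pos hra, if_pos hra, max_eq_right htop2le]
    · rw [if_neg hra, if_neg hra, sub_zero]
  · push_neg at h0
    obtain ⟨i₁, hi₁⟩ := h0
    have hvi₁ : v i₁ = 1 := (hvP i₁).resolve_left hi₁
    have hvE0 : v ∉ E0 n a := fun h => hi₁ (mem_E0.1 h i₁)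
    have htop1 : top1 v = 1 :=
      le_antisymm (top1_le_one hn hv) (hvi₁ ▸ le_top1 v i₁)
    have hif : r ≤ top1 v := by rw [htop1]; exact hr1
    by_cases h1 : ∀ j, j ≠ i₁ → v j = a
    · have hvEi : v ∈ Ei n a i₁ := by
        refine mem_Ei.2 fun j => ⟨fun hj => by rw [hj]; exact hvi₁, fun hj => h1 j hj⟩
      have hvE1 : v ∈ E1 n a := Set.mem_iUnion.2 ⟨i₁, hvEi⟩
      have htop2le : top2 v ≤ r :=
        top2_le_of hn v hr0 i₁ (fun j hj => (h1 j hj) ▸ har)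
      rw [Set.indicator_of_notMem hvE0, Set.indicator_of_mem hvE1, zero_add]
      unfold fr
      rw [if_pos hif, htop1, max_eq_right htop2le]
    · push_neg at h1
      obtain ⟨i₂, hi₂ne, hi₂a⟩ := h1
      have hvi₂ : v i₂ = 1 := (hvP i₂).resolve_left hi₂a
      have htop2 : top2 v = 1 := by
        refine le_antisymm (le_trans (top2_le_top1 hn hv) (le_of_eq htop1)) ?_
        refine le_top2 hn v fun i => ?_
        by_cases hi : i = i₁
        · exact ⟨i₂, by rw [hi]; exact hi₂ne, by rw [hvi₂]⟩
        · exact ⟨i₁, fun h => hi h.symm, by rw [hvi₁]⟩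
      have hvE1 : v ∉ E1 n a := by
        simp only [E1, Set.mem_iUnion]
        rintro ⟨i, hi⟩
        by_cases hii : i₁ = i
        · have := (mem_Ei.1 hi i₂).2 (fun h => hi₂ne (h.trans hii.symm))
          rw [hvi₂] at this; exact ha1.ne this.symm
        · have := (mem_Ei.1 hi i₁).2 hii
          rw [hvi₁] at this; exact ha1.ne this.symm
      rw [Set.indicator_of_notMem hvE0, Set.indicator_of_notMem hvE1, add_zero]
      unfold fr
      rw [if_pos hif, htop1, htop2, max_eq_left hr1, sub_self]

lemma lemA (n : ℕ) (hn : 0 < n) (r a p : ℝ) (hr0 : 0 ≤ r) (hr1 : r ≤ 1) (ha0 : 0 ≤ a)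
    (har : a ≤ r) (ha1 : a < 1) (hp0 : 0 ≤ p) (hp1 : p ≤ 1) :
    ∃ F : Measure ℝ, IsProbabilityMeasure F ∧ F (Set.Icc 0 1) = 1 ∧
      ∫ v in Set.Icc (0 : Fin n → ℝ) 1, (top1 v - if r ≤ top1 v then max (top2 v) r else 0)
        ∂(Measure.pi fun _ : Fin n => F)
      = (if r ≤ a then a - r else a) * (1-p)^n + (1-r) * (n * (p * (1-p)^(n-1))) := by
  classical
  set F : Measure ℝ := ENNReal.ofReal p • Measure.dirac 1 + ENNReal.ofReal (1-p) • Measure.dirac a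
    with hFdef
  have hFapp : ∀ s : Set ℝ, F s
      = ENNReal.ofReal p * Measure.dirac 1 s + ENNReal.ofReal (1-p) * Measure.dirac a s := by
    intro s; simp [hFdef]
  have hsum1 : ENNReal.ofReal p + ENNReal.ofReal (1-p) = 1 := by
    rw [← ENNReal.ofReal_add hp0 (by linarith), show p + (1 - p) = 1 by ring, ENNReal.ofReal_one]
  have hprob : IsProbabilityMeasure F := by
    constructor
    rw [hFapp]
    simp only [measure_univ, mul_one]
    exact hsum1
  haveI := hprob
  have hmem1 : (1:ℝ) ∈ Set.Icc (0:ℝ) 1 := by constructor <;> norm_num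
  have hmema : a ∈ Set.Icc (0:ℝ) 1 := ⟨ha0, ha1.le⟩
  have hIcc : F (Set.Icc 0 1) = 1 := by
    rw [hFapp, Measure.dirac_apply' _ measurableSet_Icc, Measure.dirac_apply' _ measurableSet_Icc,
      Set.indicator_of_mem hmem1, Set.indicator_of_mem hmema]
    simp only [Pi.one_apply, mul_one]
    exact hsum1
  have hFa : F {a} = ENNReal.ofReal (1-p) := by
    rw [hFapp, Measure.dirac_apply' _ (measurableSet_singleton a),
      Measure.dirac_apply' _ (measurableSet_singleton a),
      Set.indicator_of_notMem (by simp [Set.mem_singleton_iff, ha1.ne'] :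
        (1:ℝ) ∉ ({a} : Set ℝ)),
      Set.indicator_of_mem (Set.mem_singleton a)]
    simp
  have hF1 : F {1} = ENNReal.ofReal p := by
    rw [hFapp, Measure.dirac_apply' _ (measurableSet_singleton (1:ℝ)),
      Measure.dirac_apply' _ (measurableSet_singleton (1:ℝ)),
      Set.indicator_of_mem (Set.mem_singleton (1:ℝ)),
      Set.indicator_of_notMem (by simp [Set.mem_singleton_iff, ha1.ne] :
        a ∉ ({1} : Set ℝ))]
    simp
  have hFa1 : F ({a, 1} : Set ℝ) = 1 := by
    have hms : MeasurableSet ({a, 1} : Set ℝ) := (measurableSet_singleton (1:ℝ)).insert a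
    rw [hFapp, Measure.dirac_apply' _ hms, Measure.dirac_apply' _ hms,
      Set.indicator_of_mem (by simp), Set.indicator_of_mem (by simp)]
    simp only [Pi.one_apply, mul_one]
    exact hsum1
  refine ⟨F, hprob, hIcc, ?_⟩
  set pp := Measure.pi fun _ : Fin n => F with hpp
  haveI : IsProbabilityMeasure pp := by rw [hpp]; infer_instance
  set μ := pp.restrict (Set.Icc 0 1) with hμ
  have hE0meas : MeasurableSet (E0 n a) :=
    MeasurableSet.univ_pi fun _ => measurableSet_singleton a
  have hEimeas : ∀ i, MeasurableSet (Ei n a i) := fun i =>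
    MeasurableSet.univ_pi fun j => by split_ifs <;> exact measurableSet_singleton _
  have hE1meas : MeasurableSet (E1 n a) := MeasurableSet.iUnion hEimeas
  have hPmeas : MeasurableSet (Set.pi Set.univ (fun _ : Fin n => ({a, 1} : Set ℝ))) :=
    MeasurableSet.univ_pi fun _ => (measurableSet_singleton (1:ℝ)).insert a
  have hPfull : pp (Set.pi Set.univ (fun _ : Fin n => ({a, 1} : Set ℝ))) = 1 := by
    rw [hpp, Measure.pi_pi]
    simp [hFa1]
  have hPc : pp (Set.pi Set.univ (fun _ : Fin n => ({a, 1} : Set ℝ)))ᶜ = 0 := by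
    rw [measure_compl hPmeas (measure_ne_top _ _), hPfull, measure_univ, tsub_self]
  -- a.e. facts
  have hae1 : ∀ᵐ v ∂μ, v ∈ Set.Icc (0 : Fin n → ℝ) 1 := ae_restrict_mem measurableSet_Icc
  have hae2 : ∀ᵐ v ∂μ, ∀ i, v i = a ∨ v i = 1 := by
    have h0 : μ (Set.pi Set.univ (fun _ : Fin n => ({a, 1} : Set ℝ)))ᶜ = 0 :=
      le_antisymm (le_trans (Measure.restrict_le_self _) (le_of_eq hPc)) zero_le
    rw [ae_iff]
    refine measure_mono_null (fun v hv => ?_) h0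
    simp only [Set.mem_setOf_eq] at hv
    simp only [Set.mem_compl_iff, Set.mem_pi, Set.mem_univ, forall_true_left]
    intro hall
    exact hv fun i => by have := hall i; simpa [Set.mem_insert_iff, or_comm] using this
  have haecong : (fun v => fr r v) =ᵐ[μ]
      (fun v => Set.indicator (E0 n a) (fun _ => if r ≤ a then a - r else a) v
        + Set.indicator (E1 n a) (fun _ => 1 - r) v) := by
    filter_upwards [hae1, hae2] with v hv hvP
    exact fr_cases hn hr0 hr1 har ha1 hv hvP
  have hint : ∫ v in Set.Icc (0 : Fin n → ℝ) 1,
      (top1 v - if r ≤ top1 v then max (top2 v) r else 0) ∂pp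
      = ∫ v, (Set.indicator (E0 n a) (fun _ => if r ≤ a then a - r else a) v
        + Set.indicator (E1 n a) (fun _ => 1 - r) v) ∂μ := integral_congr_ae haecong
  -- measures of E0, E1
  have hE0sub : E0 n a ⊆ Set.Icc (0 : Fin n → ℝ) 1 := by
    intro v hv
    rw [mem_E0] at hv
    constructor <;> intro i <;> rw [hv i]
    · exact ha0
    · exact ha1.le
  have hE1sub : E1 n a ⊆ Set.Icc (0 : Fin n → ℝ) 1 := by
    rintro v hv
    obtain ⟨i, hi⟩ := Set.mem_iUnion.1 hv
    rw [mem_Ei] at hi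
    constructor <;> intro j
    · by_cases hj : j = i
      · rw [(hi j).1 hj]; exact zero_le_one
      · rw [(hi j).2 hj]; exact ha0
    · by_cases hj : j = i
      · rw [(hi j).1 hj]; exact le_rfl
      · rw [(hi j).2 hj]; exact ha1.le
  have hμE0 : μ (E0 n a) = (ENNReal.ofReal (1-p)) ^ n := by
    rw [hμ, Measure.restrict_apply hE0meas, Set.inter_eq_self_of_subset_left hE0sub, hpp]
    rw [show E0 n a = Set.pi Set.univ (fun _ => ({a} : Set ℝ)) from rfl, Measure.pi_pi]
    simp [hFa]
  have hppEi : ∀ i, pp (Ei n a i) = ENNReal.ofReal p * (ENNReal.ofReal (1-p)) ^ (n-1) := by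
    intro i
    rw [hpp, show Ei n a i = Set.pi Set.univ (fun j => if j = i then ({1} : Set ℝ) else {a})
      from rfl, Measure.pi_pi]
    have : ∀ j, F (if j = i then ({1} : Set ℝ) else {a})
        = if j = i then ENNReal.ofReal p else ENNReal.ofReal (1-p) := by
      intro j; split_ifs
      · exact hF1
      · exact hFa
    rw [Finset.prod_congr rfl (fun j _ => this j)]
    rw [← Finset.mul_prod_erase Finset.univ _ (Finset.mem_univ i),
      Finset.prod_congr rfl (fun j hj => if_neg (Finset.ne_of_mem_erase hj)),
      Finset.prod_const, Finset.card_erase_of_mem (Finset.mem_univ i), Finset.card_univ,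
      Fintype.card_fin]
    simp only [eq_self_iff_true, if_true]
  have hdisj : Pairwise (Function.onFun Disjoint (Ei n a)) := by
    intro i j hij
    rw [Function.onFun, Set.disjoint_left]
    intro v hvi hvj
    have h1 : v i = 1 := (mem_Ei.1 hvi i).1 rfl
    have h2 : v i = a := (mem_Ei.1 hvj i).2 hij
    rw [h1] at h2
    exact ha1.ne h2.symm
  have hμE1 : μ (E1 n a) = (n : ℝ≥0∞) * (ENNReal.ofReal p * (ENNReal.ofReal (1-p)) ^ (n-1)) := by
    rw [hμ, Measure.restrict_apply hE1meas, Set.inter_eq_self_of_subset_left hE1sub,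
      show E1 n a = ⋃ i, Ei n a i from rfl, measure_iUnion hdisj hEimeas, tsum_fintype]
    rw [Finset.sum_congr rfl (fun i _ => hppEi i), Finset.sum_const, Finset.card_univ,
      Fintype.card_fin, nsmul_eq_mul]
  have hInd0 : Integrable (Set.indicator (E0 n a) (fun _ => if r ≤ a then a - r else a)) μ :=
    (integrable_const _).indicator hE0meas
  have hInd1 : Integrable (Set.indicator (E1 n a) (fun _ => (1-r : ℝ))) μ :=
    (integrable_const _).indicator hE1meas
  rw [show (fun v : Fin n → ℝ => top1 v - if r ≤ top1 v then max (top2 v) r else 0)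
    = fun v => fr r v from rfl] at hint ⊢
  rw [hint, integral_add hInd0 hInd1, integral_indicator hE0meas, integral_indicator hE1meas,
    setIntegral_const, setIntegral_const, measureReal_def, measureReal_def, hμE0, hμE1]
  rw [ENNReal.toReal_pow, ENNReal.toReal_ofReal (by linarith : (0:ℝ) ≤ 1 - p)]
  rw [ENNReal.toReal_mul, ENNReal.toReal_mul, ENNReal.toReal_natCast, ENNReal.toReal_pow,
    ENNReal.toReal_ofReal hp0, ENNReal.toReal_ofReal (by linarith : (0:ℝ) ≤ 1 - p)]
  simp only [smul_eq_mul]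
  ring

lemma pi_ite_meas (n : ℕ) (F : Measure ℝ) [IsProbabilityMeasure F] (i : Fin n)
    (S T : Set ℝ) :
    (Measure.pi fun _ : Fin n => F) (Set.pi Set.univ (fun j => if j = i then S else T))
      = F S * F T ^ (n - 1) := by
  classical
  rw [Measure.pi_pi]
  rw [Finset.prod_congr rfl (fun j _ => apply_ite F (j = i) S T)]
  rw [← Finset.mul_prod_erase Finset.univ _ (Finset.mem_univ i),
    Finset.prod_congr rfl (fun j hj => if_neg (Finset.ne_of_mem_erase hj)),
    Finset.prod_const, Finset.card_erase_of_mem (Finset.mem_univ i), Finset.card_univ,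
    Fintype.card_fin]
  simp only [eq_self_iff_true, if_true]

lemma lemB (n : ℕ) (hn : 2 ≤ n) (r : ℝ) (hr0 : 0 ≤ r) (hr2 : r ≤ 1/2)
    (F : Measure ℝ) [IsProbabilityMeasure F] (hF : F (Set.Icc 0 1) = 1) :
    ∫ v in Set.Icc (0 : Fin n → ℝ) 1, (top1 v - if r ≤ top1 v then max (top2 v) r else 0)
      ∂(Measure.pi fun _ : Fin n => F)
    ≤ (1 - r) ^ n * ((n : ℝ) - 1) ^ (n - 1) / ((1 - r) * n - r) ^ (n - 1) := by
  classical
  have hn0 : 0 < n := by omega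
  have hr1 : r ≤ 1 := by linarith
  have hnn : (2:ℝ) ≤ (n:ℝ) := by exact_mod_cast hn
  set pp := Measure.pi fun _ : Fin n => F with hpp
  haveI : IsProbabilityMeasure pp := by rw [hpp]; infer_instance
  set μ := pp.restrict (Set.Icc 0 1) with hμ
  set ν := volume.restrict (Set.Icc (0:ℝ) 1) with hν
  set Q : (Fin n → ℝ) → ℝ → Prop :=
    fun v t => t < top1 v ∧ (top1 v < r ∨ (r ≤ t ∧ top2 v ≤ t)) with hQ
  -- step 1 : to lintegral
  have hae1 : ∀ᵐ v ∂μ, v ∈ Set.Icc (0 : Fin n → ℝ) 1 := ae_restrict_mem measurableSet_Icc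
  have h0 : 0 ≤ᵐ[μ] fun v => fr r v :=
    hae1.mono fun v hv => fr_nonneg r hn0 hr0 hv
  have hstep1 : ∫ v in Set.Icc (0 : Fin n → ℝ) 1,
      (top1 v - if r ≤ top1 v then max (top2 v) r else 0) ∂pp
      = (∫⁻ v, ENNReal.ofReal (fr r v) ∂μ).toReal :=
    integral_eq_lintegral_of_nonneg_ae h0 (mfr r).aestronglyMeasurable
  -- step 2 : pointwise layer cake
  have hstep2 : ∫⁻ v, ENNReal.ofReal (fr r v) ∂μ = ∫⁻ v, ν {t | Q v t} ∂μ := by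
    apply lintegral_congr_ae
    filter_upwards [hae1] with v hv
    have h01 : 0 ≤ top1 v := top1_nonneg hn0 hv
    have h11 : top1 v ≤ 1 := top1_le_one hn0 hv
    have h22 : top2 v ≤ top1 v := top2_le_top1 hn0 hv
    rw [hν, Measure.restrict_apply' measurableSet_Icc]
    by_cases hif : r ≤ top1 v
    · have hset : {t | Q v t} ∩ Set.Icc (0:ℝ) 1 = Set.Ico (max (top2 v) r) (top1 v) := by
        ext t
        simp only [hQ, Set.mem_inter_iff, Set.mem_setOf_eq, Set.mem_Icc, Set.mem_Ico,
          max_le_iff]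
        constructor
        · rintro ⟨⟨ht1, hcase⟩, ht0, ht2⟩
          rcases hcase with h | ⟨hrt, h2t⟩
          · exact absurd (lt_of_le_of_lt hif h) (lt_irrefl r)
          · exact ⟨⟨h2t, hrt⟩, ht1⟩
        · rintro ⟨⟨h2t, hrt⟩, ht1⟩
          exact ⟨⟨ht1, Or.inr ⟨hrt, h2t⟩⟩, le_trans hr0 hrt, le_trans ht1.le h11⟩
      rw [hset, Real.volume_Ico]
      unfold fr
      rw [if_pos hif]
    · push_neg at hif
      have hset : {t | Q v t} ∩ Set.Icc (0:ℝ) 1 = Set.Ico 0 (top1 v) := by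
        ext t
        simp only [hQ, Set.mem_inter_iff, Set.mem_setOf_eq, Set.mem_Icc, Set.mem_Ico]
        constructor
        · rintro ⟨⟨ht1, _⟩, ht0, _⟩
          exact ⟨ht0, ht1⟩
        · rintro ⟨ht0, ht1⟩
          exact ⟨⟨ht1, Or.inl hif⟩, ht0, le_trans ht1.le h11⟩
      rw [hset, Real.volume_Ico]
      unfold fr
      rw [if_neg (not_le.2 hif), sub_zero]
  -- step 3 : Fubini
  have hBmeas : MeasurableSet {q : (Fin n → ℝ) × ℝ | Q q.1 q.2} := by
    apply MeasurableSet.inter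
    · exact measurableSet_lt measurable_snd (mtop1.comp measurable_fst)
    · apply MeasurableSet.union
      · exact measurableSet_lt (mtop1.comp measurable_fst) measurable_const
      · exact (measurableSet_le measurable_const measurable_snd).inter
          (measurableSet_le (mtop2.comp measurable_fst) measurable_snd)
  have hstep3 : ∫⁻ v, ν {t | Q v t} ∂μ
      = ∫⁻ t in Set.Icc (0:ℝ) 1, μ {v | Q v t} ∂volume := by
    calc ∫⁻ v, ν {t | Q v t} ∂μ
        = ∫⁻ v, ν (Prod.mk v ⁻¹' {q : (Fin n → ℝ) × ℝ | Q q.1 q.2}) ∂μ := rfl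
      _ = (μ.prod ν) {q : (Fin n → ℝ) × ℝ | Q q.1 q.2} := (Measure.prod_apply hBmeas).symm
      _ = ∫⁻ t, μ ((fun v => (v, t)) ⁻¹' {q : (Fin n → ℝ) × ℝ | Q q.1 q.2}) ∂ν :=
          Measure.prod_apply_symm hBmeas
      _ = ∫⁻ t in Set.Icc (0:ℝ) 1, μ {v | Q v t} ∂volume := rfl
  -- step 4 : bound
  set a : ℝ := (F (Set.Iio r)).toReal with ha
  have ha0 : 0 ≤ a := ENNReal.toReal_nonneg
  have hFione : F (Set.Iio r) ≤ 1 := prob_le_one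
  have ha1 : a ≤ 1 := by
    rw [ha]
    exact le_trans (ENNReal.toReal_mono one_ne_top hFione) (by simp)
  have hIio : F (Set.Iio r) = ENNReal.ofReal a := (ENNReal.ofReal_toReal (measure_ne_top F _)).symm
  set c : ℝ := max a (((n:ℝ)-1)/(n:ℝ)) with hc
  have hc0 : 0 ≤ c := le_trans ha0 (le_max_left _ _)
  have hc1 : c ≤ 1 := by
    apply max_le ha1
    rw [div_le_one (by linarith : (0:ℝ) < (n:ℝ))]; linarith
  set M : ℝ := (n:ℝ) * c ^ (n-1) * (1 - c) with hM
  have hM0 : 0 ≤ M := by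
    apply mul_nonneg (mul_nonneg (by positivity) (pow_nonneg hc0 _))
    linarith
  have hbound1 : ∀ t ∈ Set.Ico (0:ℝ) r, μ {v | Q v t} ≤ ENNReal.ofReal (a ^ n) := by
    intro t ht
    have hsub : {v | Q v t} ∩ Set.Icc (0 : Fin n → ℝ) 1
        ⊆ Set.pi Set.univ (fun _ : Fin n => Set.Iio r) := by
      rintro v ⟨hvQ, _⟩
      have htop : top1 v < r := by
        rcases hvQ.2 with h | ⟨hrt, _⟩
        · exact h
        · exact absurd (lt_of_le_of_lt hrt ht.2) (lt_irrefl r)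
      intro i _
      exact lt_of_le_of_lt (le_top1 v i) htop
    calc μ {v | Q v t} = pp ({v | Q v t} ∩ Set.Icc 0 1) := by
          rw [hμ, Measure.restrict_apply' measurableSet_Icc]
      _ ≤ pp (Set.pi Set.univ (fun _ : Fin n => Set.Iio r)) := measure_mono hsub
      _ = ENNReal.ofReal (a ^ n) := by
          rw [hpp, Measure.pi_pi]
          simp only [hIio, Finset.prod_const, Finset.card_univ, Fintype.card_fin]
          rw [ENNReal.ofReal_pow ha0]
  have hbound2 : ∀ t ∈ Set.Icc r 1, μ {v | Q v t} ≤ ENNReal.ofReal M := by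
    intro t ht
    set s : ℝ := (F (Set.Iic t)).toReal with hs
    have hs0 : 0 ≤ s := ENNReal.toReal_nonneg
    have hsle : F (Set.Iic t) ≤ 1 := prob_le_one
    have hs1 : s ≤ 1 := le_trans (ENNReal.toReal_mono one_ne_top hsle) (by simp)
    have hsIic : F (Set.Iic t) = ENNReal.ofReal s :=
      (ENNReal.ofReal_toReal (measure_ne_top F _)).symm
    have has : a ≤ s := by
      rw [ha, hs]
      apply ENNReal.toReal_mono (measure_ne_top F _)
      apply measure_mono
      intro x hx
      exact le_trans (le_of_lt hx) ht.1
    have hIoi : F (Set.Ioi t) = ENNReal.ofReal (1 - s) := by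
      rw [← Set.compl_Iic, measure_compl measurableSet_Iic (measure_ne_top F _), measure_univ,
        hsIic, ← ENNReal.ofReal_one, ← ENNReal.ofReal_sub _ hs0]
    have hsub : {v | Q v t} ∩ Set.Icc (0 : Fin n → ℝ) 1
        ⊆ ⋃ i, Set.pi Set.univ (fun j => if j = i then Set.Ioi t else Set.Iic t) := by
      rintro v ⟨hvQ, hvI⟩
      have hnotlt : ¬ top1 v < r := fun h => absurd (lt_trans (lt_of_le_of_lt ht.1 hvQ.1) h)
        (lt_irrefl _)
      rcases hvQ.2 with h | ⟨hrt, h2t⟩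
      · exact absurd h hnotlt
      obtain ⟨i₀, hi₀⟩ := exists_of_top2_le hn0 v h2t
      obtain ⟨i₁, hi₁⟩ := (lt_top1_iff hn0 v t).1 hvQ.1
      have hii : i₁ = i₀ := by
        by_contra hne
        exact absurd (hi₀ i₁ hne) (not_le.2 hi₁)
      refine Set.mem_iUnion.2 ⟨i₀, fun j _ => ?_⟩
      show v j ∈ if j = i₀ then Set.Ioi t else Set.Iic t
      by_cases hj : j = i₀
      · rw [if_pos hj, hj]
        exact Set.mem_Ioi.2 (hii ▸ hi₁)
      · rw [if_neg hj]
        exact Set.mem_Iic.2 (hi₀ j hj)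
    calc μ {v | Q v t} = pp ({v | Q v t} ∩ Set.Icc 0 1) := by
          rw [hμ, Measure.restrict_apply' measurableSet_Icc]
      _ ≤ pp (⋃ i, Set.pi Set.univ (fun j => if j = i then Set.Ioi t else Set.Iic t)) :=
          measure_mono hsub
      _ ≤ ∑' i : Fin n, pp (Set.pi Set.univ (fun j => if j = i then Set.Ioi t else Set.Iic t)) :=
          measure_iUnion_le _
      _ = ∑ i : Fin n, pp (Set.pi Set.univ (fun j => if j = i then Set.Ioi t else Set.Iic t)) :=
          tsum_fintype _
      _ = (n : ℝ≥0∞) * (F (Set.Ioi t) * F (Set.Iic t) ^ (n-1)) := by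
          rw [Finset.sum_congr rfl (fun i _ => pi_ite_meas n F i _ _), Finset.sum_const,
            Finset.card_univ, Fintype.card_fin, nsmul_eq_mul]
      _ = ENNReal.ofReal ((n:ℝ) * ((1 - s) * s ^ (n-1))) := by
          rw [hIoi, hsIic, ← ENNReal.ofReal_natCast n, ← ENNReal.ofReal_pow hs0,
            ← ENNReal.ofReal_mul (by linarith), ← ENNReal.ofReal_mul (by positivity)]
      _ ≤ ENNReal.ofReal M := by
          apply ENNReal.ofReal_le_ofReal
          have := lemPhiBound n hn ha0 has hs1
          rw [hM, hc]
          calc (n:ℝ) * ((1 - s) * s ^ (n-1)) = (n:ℝ) * s ^ (n-1) * (1 - s) := by ring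
            _ ≤ _ := this
  have hsplit : ∫⁻ t in Set.Icc (0:ℝ) 1, μ {v | Q v t} ∂volume
      ≤ ENNReal.ofReal (a ^ n * r + M * (1 - r)) := by
    rw [← Set.Ico_union_Icc_eq_Icc hr0 hr1,
      lintegral_union measurableSet_Icc
        (Set.disjoint_left.2 fun t htl htr => absurd htr.1 (not_le.2 htl.2))]
    have h1 : ∫⁻ t in Set.Ico (0:ℝ) r, μ {v | Q v t} ∂volume
        ≤ ENNReal.ofReal (a ^ n * r) := by
      calc ∫⁻ t in Set.Ico (0:ℝ) r, μ {v | Q v t} ∂volume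
          ≤ ∫⁻ _ in Set.Ico (0:ℝ) r, ENNReal.ofReal (a ^ n) ∂volume :=
            setLIntegral_mono measurable_const hbound1
        _ = ENNReal.ofReal (a ^ n) * volume (Set.Ico (0:ℝ) r) := setLIntegral_const _ _
        _ = ENNReal.ofReal (a ^ n * r) := by
            rw [Real.volume_Ico, sub_zero, ← ENNReal.ofReal_mul (by positivity)]
    have h2 : ∫⁻ t in Set.Icc r 1, μ {v | Q v t} ∂volume
        ≤ ENNReal.ofReal (M * (1 - r)) := by
      calc ∫⁻ t in Set.Icc r 1, μ {v | Q v t} ∂volume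
          ≤ ∫⁻ _ in Set.Icc r 1, ENNReal.ofReal M ∂volume :=
            setLIntegral_mono measurable_const hbound2
        _ = ENNReal.ofReal M * volume (Set.Icc r 1) := setLIntegral_const _ _
        _ = ENNReal.ofReal (M * (1 - r)) := by
            rw [Real.volume_Icc, ← ENNReal.ofReal_mul hM0]
    calc ∫⁻ t in Set.Ico (0:ℝ) r, μ {v | Q v t} ∂volume
          + ∫⁻ t in Set.Icc r 1, μ {v | Q v t} ∂volume
        ≤ ENNReal.ofReal (a ^ n * r) + ENNReal.ofReal (M * (1 - r)) := add_le_add h1 h2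
      _ = ENNReal.ofReal (a ^ n * r + M * (1 - r)) :=
          (ENNReal.ofReal_add (by positivity) (mul_nonneg hM0 (by linarith))).symm
  have hfin : a ^ n * r + M * (1 - r)
      ≤ (1 - r) ^ n * ((n : ℝ) - 1) ^ (n - 1) / ((1 - r) * n - r) ^ (n - 1) := by
    have := lemFin n hn r a hr0 hr2 ha0 ha1
    rw [hM, hc]
    linarith
  have hRpos : 0 ≤ (1 - r) ^ n * ((n : ℝ) - 1) ^ (n - 1) / ((1 - r) * n - r) ^ (n - 1) := by
    have hD : (0:ℝ) < (1 - r) * n - r := by nlinarith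
    exact div_nonneg (mul_nonneg (pow_nonneg (by linarith) _) (pow_nonneg (by linarith) _))
      (pow_nonneg hD.le _)
  rw [hstep1]
  apply ENNReal.toReal_le_of_le_ofReal hRpos
  rw [hstep2, hstep3]
  exact le_trans hsplit (ENNReal.ofReal_le_ofReal (by linarith))

lemma lemId (n : ℕ) (hn : 2 ≤ n) (r : ℝ) (hr0 : 0 ≤ r) (hr2 : r ≤ 1/2) :
    ∃ p : ℝ, 0 ≤ p ∧ p ≤ 1 ∧ ∀ b : ℝ,
      b * (1-p)^n + (1-r) * ((n:ℝ) * (p * (1-p)^(n-1)))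
        = (1-r)^n * ((n:ℝ)-1)^(n-1) / ((1-r)*n - r)^(n-1) - (r - b) * (1-p)^n := by
  have hnn : (2:ℝ) ≤ (n:ℝ) := by exact_mod_cast hn
  have hD : (0:ℝ) < (1-r)*n - r := by nlinarith
  refine ⟨(1-2*r)/((1-r)*n - r), div_nonneg (by linarith) hD.le, ?_, ?_⟩
  · rw [div_le_one hD]; nlinarith
  set p := (1-2*r)/((1-r)*n - r) with hpdef
  have h1p : 1 - p = ((n:ℝ)-1)*(1-r)/((1-r)*n - r) := by
    rw [hpdef]
    field_simp
    ring
  have hpow : (1-p)^n = (1-p)^(n-1) * (1-p) := by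
    rw [← pow_succ, Nat.sub_add_cancel (by omega : 1 ≤ n)]
  have hpowr : (1-r)^n = (1-r)^(n-1) * (1-r) := by
    rw [← pow_succ, Nat.sub_add_cancel (by omega : 1 ≤ n)]
  have hkey : r * (1-p) + (1-r) * ((n:ℝ) * p) = 1 - r := by
    rw [h1p, hpdef]
    have hne : (1-r)*(n:ℝ) - r ≠ 0 := hD.ne'
    rw [mul_div_assoc', mul_div_assoc', mul_div_assoc', ← add_div, div_eq_iff hne]
    ring
  have main : r * (1-p)^n + (1-r) * ((n:ℝ) * (p * (1-p)^(n-1)))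
      = (1-r)^n * ((n:ℝ)-1)^(n-1) / ((1-r)*n - r)^(n-1) := by
    calc r*(1-p)^n + (1-r)*((n:ℝ)*(p*(1-p)^(n-1)))
        = (1-p)^(n-1) * (r*(1-p) + (1-r)*((n:ℝ)*p)) := by rw [hpow]; ring
      _ = (1-p)^(n-1) * (1-r) := by rw [hkey]
      _ = (1-r)^n * ((n:ℝ)-1)^(n-1) / ((1-r)*n - r)^(n-1) := by
          rw [h1p, div_pow, mul_pow, hpowr]
          ring
  intro b
  rw [← main]
  ring

lemma sSup_eq_of (S : Set ℝ) (b : ℝ) (hub : ∀ w ∈ S, w ≤ b)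
    (happrox : ∀ ε, 0 < ε → ∃ w ∈ S, b - ε < w) : sSup S = b := by
  have hne : S.Nonempty := by
    obtain ⟨w, hw, _⟩ := happrox 1 one_pos
    exact ⟨w, hw⟩
  apply le_antisymm (csSup_le hne hub)
  by_contra h
  push_neg at h
  obtain ⟨w, hw, hlt⟩ := happrox (b - sSup S) (by linarith)
  have := le_csSup ⟨b, hub⟩ hw
  linarith

end Meas

end S17

/-- Worst-case regret of the second-price auction with deterministic reserve `r`
against i.i.d. value distributions on `[0,1]`. -/
def Wfun (n : ℕ) (r : ℝ) : ℝ :=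
  sSup {w | ∃ F : Measure ℝ, IsProbabilityMeasure F ∧ F (Set.Icc 0 1) = 1 ∧
    w = ∫ v in Set.Icc (0 : Fin n → ℝ) 1,
          (top1 v - if r ≤ top1 v then max (top2 v) r else 0)
        ∂(Measure.pi fun _ : Fin n => F)}

/-- `W₁(r) = max(1-r, r)`, and for `n ≥ 2`,
`Wₙ(r) = (1-r)^n (n-1)^{n-1} / ((1-r)n - r)^{n-1}` if `r ≤ 1/2` and `Wₙ(r) = r` if
`r ≥ 1/2`. -/
theorem stmt17 (r : ℝ) (hr : r ∈ Set.Icc (0:ℝ) 1) :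
    Wfun 1 r = max (1 - r) r ∧
    ∀ n : ℕ, 2 ≤ n →
      (r ≤ 1 / 2 →
        Wfun n r = (1 - r) ^ n * ((n : ℝ) - 1) ^ (n - 1) / ((1 - r) * n - r) ^ (n - 1)) ∧
      (1 / 2 ≤ r → Wfun n r = r) := by
  obtain ⟨hr0, hr1⟩ := hr
  constructor
  · unfold Wfun
    apply S17.sSup_eq_of
    · rintro w ⟨F, hP, hIc, rfl⟩
      haveI := hP
      exact S17.lemC r 1 one_pos hr0 hr1 F hIc
    · intro ε hε
      by_cases hc : r ≤ 1 - r
      · obtain ⟨F, hP, hIc, hval⟩ :=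
          S17.lemA 1 one_pos r 0 1 hr0 hr1 le_rfl hr0 zero_lt_one zero_le_one le_rfl
        refine ⟨_, ⟨F, hP, hIc, rfl⟩, ?_⟩
        rw [hval]
        have hv : (if r ≤ (0:ℝ) then (0:ℝ) - r else 0) * (1-1)^1
            + (1-r) * (((1:ℕ):ℝ) * (1 * (1-(1:ℝ))^(1-1))) = 1 - r := by
          norm_num
        rw [hv, max_eq_left hc]
        linarith
      · push_neg at hc
        have hrpos : (0:ℝ) < r := by linarith
        set a := max 0 (r - ε/2) with hadef
        have ha0 : 0 ≤ a := le_max_left _ _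
        have halt : a < r := max_lt hrpos (by linarith)
        have ha1 : a < 1 := lt_of_lt_of_le halt hr1
        obtain ⟨F, hP, hIc, hval⟩ :=
          S17.lemA 1 one_pos r a 0 hr0 hr1 ha0 halt.le ha1 le_rfl zero_le_one
        refine ⟨_, ⟨F, hP, hIc, rfl⟩, ?_⟩
        rw [hval]
        have hv : (if r ≤ a then a - r else a) * (1-0)^1
            + (1-r) * (((1:ℕ):ℝ) * (0 * (1-(0:ℝ))^(1-1))) = a := by
          rw [if_neg (not_le.2 halt)]
          norm_num
        rw [hv, max_eq_right hc.le]
        calc r - ε < r - ε/2 := by linarith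
          _ ≤ a := le_max_right _ _
  · intro n hn
    have hn0 : 0 < n := by omega
    have hnn : (2:ℝ) ≤ (n:ℝ) := by exact_mod_cast hn
    constructor
    · intro hr2
      unfold Wfun
      apply S17.sSup_eq_of
      · rintro w ⟨F, hP, hIc, rfl⟩
        haveI := hP
        exact S17.lemB n hn r hr0 hr2 F hIc
      · intro ε hε
        obtain ⟨p, hp0, hp1, hid⟩ := S17.lemId n hn r hr0 hr2
        set a := r - min r (ε/2) with hadef
        have hmin0 : 0 ≤ min r (ε/2) := le_min hr0 (by linarith)
        have hminr : min r (ε/2) ≤ r := min_le_left _ _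
        have hmine : min r (ε/2) ≤ ε/2 := min_le_right _ _
        have ha0 : 0 ≤ a := by rw [hadef]; linarith
        have har : a ≤ r := by rw [hadef]; linarith
        have ha1 : a < 1 := by
          have : a ≤ r := har
          linarith
        obtain ⟨F, hP, hIc, hval⟩ :=
          S17.lemA n hn0 r a p hr0 hr1 ha0 har ha1 hp0 hp1
        refine ⟨_, ⟨F, hP, hIc, rfl⟩, ?_⟩
        rw [hval, hid (if r ≤ a then a - r else a)]
        have h1pn : (0:ℝ) ≤ (1-p)^n := pow_nonneg (by linarith) n
        have h1pn1 : (1-p)^n ≤ 1 := pow_le_one₀ (by linarith) (by linarith)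
        have hkey : 0 ≤ r - (if r ≤ a then a - r else a)
            ∧ r - (if r ≤ a then a - r else a) ≤ ε/2 := by
          by_cases hra : r ≤ a
          · rw [if_pos hra]
            have haeq : a = r := le_antisymm har hra
            have hm0 : min r (ε/2) = 0 := by rw [hadef] at haeq; linarith
            have hreq : r = 0 := by
              rcases min_choice r (ε/2) with h | h
              · rw [hm0] at h; exact h.symm
              · rw [hm0] at h; linarith
            constructor <;> (rw [haeq, hreq]; simp; try linarith)
          · rw [if_neg hra]
            constructor
            · linarith
            · rw [hadef]; linarith
        have hprod : (r - (if r ≤ a then a - r else a)) * (1-p)^n ≤ ε/2 := by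
          calc (r - (if r ≤ a then a - r else a)) * (1-p)^n
              ≤ (ε/2) * 1 := mul_le_mul hkey.2 h1pn1 h1pn (by linarith)
            _ = ε/2 := mul_one _
        linarith
    · intro hr2'
      unfold Wfun
      apply S17.sSup_eq_of
      · rintro w ⟨F, hP, hIc, rfl⟩
        haveI := hP
        have := S17.lemC r n hn0 hr0 hr1 F hIc
        rwa [max_eq_right (by linarith : 1 - r ≤ r)] at this
      · intro ε hε
        have hrpos : (0:ℝ) < r := by linarith
        set a := max 0 (r - ε/2) with hadef
        have ha0 : 0 ≤ a := le_max_left _ _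
        have halt : a < r := max_lt hrpos (by linarith)
        have ha1 : a < 1 := lt_of_lt_of_le halt hr1
        obtain ⟨F, hP, hIc, hval⟩ :=
          S17.lemA n hn0 r a 0 hr0 hr1 ha0 halt.le ha1 le_rfl zero_le_one
        refine ⟨_, ⟨F, hP, hIc, rfl⟩, ?_⟩
        rw [hval]
        have hv : (if r ≤ a then a - r else a) * (1-0)^n
            + (1-r) * (((n:ℕ):ℝ) * (0 * (1-(0:ℝ))^(n-1))) = a := by
          rw [if_neg (not_le.2 halt)]
          norm_num
        rw [hv]
        calc r - ε < r - ε/2 := by linarith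
          _ ≤ a := le_max_right _ _


end
end
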